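/- arXiv:1809.09792 — 7 statements merged into one kernel-verified Lean document; each statement's English description precedes it below -/
import Mathlib

section
/- Let P be a convex polygon, w a point in P, and a a vertex of P that is a local maximum of the distance-to-w function restricted to P. Then the line L through a perpendicular to the segment wa is a supporting line of P (all of P lies in one closed half-plane bounded by L). -/
open scoped RealInnerProductSpace

/-- If `a ∈ P` is a local maximum of the distance to `w` over a compact
convex polygon `P = convexHull V` containing `w`, with `a ≠ w`, then the line through `a`
perpendicular to `w - a` supports `P`: all of `P` lies in the closed half-plane
`{x | ⟪x - a, a - w⟫ ≤ 0}` (the side containing `w`). -/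
theorem stmt0 (V : Finset (EuclideanSpace ℝ (Fin 2)))
    (P : Set (EuclideanSpace ℝ (Fin 2))) (hP : P = convexHull ℝ (V : Set (EuclideanSpace ℝ (Fin 2))))
    (w a : EuclideanSpace ℝ (Fin 2)) (hw : w ∈ P) (ha : a ∈ P) (hne : a ≠ w)
    (hlocmax : ∃ ε > 0, ∀ x ∈ P, dist x a < ε → dist w x ≤ dist w a) :
    ∀ x ∈ P, ⟪x - a, a - w⟫ ≤ 0 := by
  obtain ⟨ε, hε, hmax⟩ := hlocmax
  intro x hx
  by_contra hpos
  push_neg at hpos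
  have hxa : x ≠ a := by
    rintro rfl
    simp at hpos
  have hnorm : (0:ℝ) < ‖x - a‖ := by
    rwa [norm_pos_iff, sub_ne_zero]
  set t : ℝ := min (ε / (2 * ‖x - a‖)) 1 with ht
  have ht0 : 0 < t := lt_min (by positivity) one_pos
  have ht1 : t ≤ 1 := min_le_right _ _
  set y : EuclideanSpace ℝ (Fin 2) := a + t • (x - a) with hy
  have hyP : y ∈ P := by
    have hconv : Convex ℝ P := hP ▸ convex_convexHull ℝ _
    have : (1 - t) • a + t • x ∈ P := hconv ha hx (by linarith) (le_of_lt ht0) (by ring)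
    convert this using 1
    simp [hy, smul_sub]
    module
  have hdist : dist y a < ε := by
    have : dist y a = t * ‖x - a‖ := by
      simp [hy, dist_eq_norm, norm_smul, abs_of_pos ht0]
    rw [this]
    calc t * ‖x - a‖ ≤ (ε / (2 * ‖x - a‖)) * ‖x - a‖ := by
          apply mul_le_mul_of_nonneg_right (min_le_left _ _) hnorm.le
      _ = ε / 2 := by field_simp
      _ < ε := by linarith
  have hle := hmax y hyP hdist
  -- but ‖y - w‖^2 > ‖a - w‖^2
  have hsq : dist w a ^ 2 < dist w y ^ 2 := by
    have h1 : dist w y ^ 2 = ‖(a - w) + t • (x - a)‖ ^ 2 := by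
      have hv : y - w = (a - w) + t • (x - a) := by rw [hy]; module
      rw [dist_eq_norm', hv]
    rw [h1, norm_add_sq_real, dist_eq_norm', norm_smul, real_inner_smul_right,
      real_inner_comm]
    nlinarith [sq_nonneg (‖t‖ * ‖x - a‖), mul_pos ht0 hpos]
  have : dist w a < dist w y := by
    nlinarith [dist_nonneg (x := w) (y := a), dist_nonneg (x := w) (y := y)]
  linarith
end

section
/- Let v be a vertex of a convex polygon P whose interior angle is strictly less than π/2 (acute). Then for every point p ∈ P with p ≠ v, the vertex v is a strict local maximum of the distance to p: every point x ∈ P sufficiently close to v with x ≠ v satisfies dist(p, x) < dist(p, v). -/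
open EuclideanSpace Finset

private lemma inner_pos_of_angle_lt {E : Type*} [NormedAddCommGroup E]
    [InnerProductSpace ℝ E] {a b : E} (ha : a ≠ 0) (hb : b ≠ 0)
    (h : InnerProductGeometry.angle a b < Real.pi / 2) :
    (0 : ℝ) < inner ℝ a b := by
  have hcos : Real.cos (InnerProductGeometry.angle a b) =
      inner ℝ a b / (‖a‖ * ‖b‖) := InnerProductGeometry.cos_angle a b
  have hpos : 0 < Real.cos (InnerProductGeometry.angle a b) := by
    apply Real.cos_pos_of_mem_Ioo
    constructor
    · have := InnerProductGeometry.angle_nonneg a b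
      have : (0:ℝ) < Real.pi / 2 := by positivity
      linarith [InnerProductGeometry.angle_nonneg a b]
    · exact h
  have hna : 0 < ‖a‖ := norm_pos_iff.mpr ha
  have hnb : 0 < ‖b‖ := norm_pos_iff.mpr hb
  have := hcos ▸ hpos
  have h2 : 0 < inner ℝ a b / (‖a‖ * ‖b‖) := this
  by_contra hle
  push_neg at hle
  have : inner ℝ a b / (‖a‖ * ‖b‖) ≤ 0 := div_nonpos_of_nonpos_of_nonneg hle (by positivity)
  linarith

/-- If `v` is an acute vertex of a compact convex polygon `P` (the interior
angle at `v`, i.e. the supremum of angles `∠ x v y` over `x, y ∈ P \ {v}`, is less than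
`π/2`), then for every `p ∈ P` with `p ≠ v`, `v` is a strict local maximum of the distance
to `p`. -/
theorem stmt1 (V : Finset (EuclideanSpace ℝ (Fin 2)))
    (P : Set (EuclideanSpace ℝ (Fin 2))) (hP : P = convexHull ℝ (V : Set (EuclideanSpace ℝ (Fin 2))))
    (v : EuclideanSpace ℝ (Fin 2)) (hv : v ∈ V)
    (hacute : ∀ x ∈ P, x ≠ v → ∀ y ∈ P, y ≠ v →
      EuclideanGeometry.angle x v y < Real.pi / 2) :
    ∀ p ∈ P, p ≠ v → ∃ ε > 0, ∀ x ∈ P, x ≠ v → dist x v < ε → dist p x < dist p v := by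
  classical
  intro p hp hpv
  -- members of V are in P
  have hVP : ∀ u ∈ V, u ∈ P := fun u hu => by
    rw [hP]; exact subset_convexHull ℝ _ hu
  -- V.erase v is nonempty
  have hne : (V.erase v).Nonempty := by
    by_contra h
    rw [Finset.not_nonempty_iff_eq_empty] at h
    have hVv : (V : Set (EuclideanSpace ℝ (Fin 2))) = {v} := by
      ext u
      simp only [Finset.coe_insert, Set.mem_singleton_iff, Finset.mem_coe]
      constructor
      · intro hu
        by_contra huv
        have : u ∈ V.erase v := Finset.mem_erase.mpr ⟨huv, hu⟩
        simp [h] at this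
      · rintro rfl; exact hv
    rw [hP, hVv, convexHull_singleton] at hp
    exact hpv hp
  -- inner products with vertices are positive
  have hinner : ∀ u ∈ V.erase v, (0:ℝ) < inner ℝ (p - v) (u - v) := by
    intro u hu
    obtain ⟨huv, huV⟩ := Finset.mem_erase.mp hu
    have hang := hacute p hp hpv u (hVP u huV) huv
    have : EuclideanGeometry.angle p v u =
        InnerProductGeometry.angle (p - v) (u - v) := rfl
    rw [this] at hang
    exact inner_pos_of_angle_lt (sub_ne_zero.mpr hpv) (sub_ne_zero.mpr huv) hang
  set c : ℝ := (V.erase v).inf' hne (fun u => (inner ℝ (p - v) (u - v) : ℝ)) with hc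
  have hcpos : 0 < c := by
    rw [hc]
    obtain ⟨u, hu, hueq⟩ := Finset.exists_mem_eq_inf' hne (fun u => (inner ℝ (p - v) (u - v) : ℝ))
    rw [hueq]; exact hinner u hu
  set M : ℝ := (V.erase v).sup' hne (fun u => ‖u - v‖) with hM
  have hMpos : 0 < M := by
    obtain ⟨u, hu⟩ := hne
    have huv : u ≠ v := (Finset.mem_erase.mp hu).1
    calc (0:ℝ) < ‖u - v‖ := norm_pos_iff.mpr (sub_ne_zero.mpr huv)
      _ ≤ M := Finset.le_sup' (fun u => ‖u - v‖) hu
  refine ⟨2 * c / M, by positivity, ?_⟩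
  intro x hx hxv hdx
  -- get convex combination
  rw [hP, Finset.convexHull_eq] at hx
  obtain ⟨w, hw0, hw1, hwx⟩ := hx
  rw [Finset.centerMass_eq_of_sum_1 _ _ hw1] at hwx
  simp only [id] at hwx
  have hxsub : x - v = ∑ u ∈ V, w u • (u - v) := by
    have : ∑ u ∈ V, w u • (u - v) = (∑ u ∈ V, w u • u) - (∑ u ∈ V, w u) • v := by
      rw [Finset.sum_smul]
      rw [← Finset.sum_sub_distrib]
      congr 1; ext u; rw [smul_sub]
    rw [this, hw1, hwx, one_smul]
  have herase : x - v = ∑ u ∈ V.erase v, w u • (u - v) := by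
    rw [hxsub]
    exact (Finset.sum_erase V (by rw [sub_self, smul_zero])).symm
  set t : ℝ := ∑ u ∈ V.erase v, w u with ht
  have hw0' : ∀ u ∈ V.erase v, 0 ≤ w u := fun u hu => hw0 u (Finset.mem_erase.mp hu).2
  -- norm bound
  have hnorm : ‖x - v‖ ≤ M * t := by
    rw [herase]
    calc ‖∑ u ∈ V.erase v, w u • (u - v)‖ ≤ ∑ u ∈ V.erase v, ‖w u • (u - v)‖ :=
          norm_sum_le _ _
      _ ≤ ∑ u ∈ V.erase v, w u * M := by
          apply Finset.sum_le_sum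
          intro u hu
          rw [norm_smul, Real.norm_eq_abs, abs_of_nonneg (hw0' u hu)]
          exact mul_le_mul_of_nonneg_left (Finset.le_sup' (fun u => ‖u - v‖) hu) (hw0' u hu)
      _ = M * t := by rw [ht, ← Finset.sum_mul, mul_comm]
  -- inner bound
  have hinnerge : c * t ≤ inner ℝ (p - v) (x - v) := by
    rw [herase, inner_sum]
    have : c * t = ∑ u ∈ V.erase v, w u * c := by
      rw [← Finset.sum_mul, mul_comm]
    rw [this]
    apply Finset.sum_le_sum
    intro u hu
    rw [real_inner_smul_right]
    exact mul_le_mul_of_nonneg_left (Finset.inf'_le (fun u => (inner ℝ (p - v) (u - v) : ℝ)) hu) (hw0' u hu)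
  have hxvpos : 0 < ‖x - v‖ := norm_pos_iff.mpr (sub_ne_zero.mpr hxv)
  have htpos : 0 < t := by
    by_contra h
    push_neg at h
    have : M * t ≤ 0 := mul_nonpos_of_nonneg_of_nonpos hMpos.le h
    linarith
  have hdx' : ‖x - v‖ < 2 * c / M := by rwa [dist_eq_norm] at hdx
  -- key inequality
  have hkey : ‖x - v‖ ^ 2 < 2 * inner ℝ (p - v) (x - v) := by
    have h1 : ‖x - v‖ ^ 2 ≤ ‖x - v‖ * (M * t) := by
      rw [sq]
      exact mul_le_mul_of_nonneg_left hnorm hxvpos.le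
    have h2 : ‖x - v‖ * (M * t) < (2 * c / M) * (M * t) :=
      mul_lt_mul_of_pos_right hdx' (by positivity)
    have h3 : (2 * c / M) * (M * t) = 2 * (c * t) := by
      field_simp
    calc ‖x - v‖ ^ 2 ≤ ‖x - v‖ * (M * t) := h1
      _ < 2 * (c * t) := by rw [← h3]; exact h2
      _ ≤ 2 * inner ℝ (p - v) (x - v) := by linarith
  -- conclude
  have hsq : dist p x ^ 2 < dist p v ^ 2 := by
    rw [dist_eq_norm, dist_eq_norm]
    have hexp : p - x = (p - v) - (x - v) := by abel
    rw [hexp, @norm_sub_sq_real]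
    linarith
  exact lt_of_pow_lt_pow_left₀ 2 dist_nonneg hsq
end

section
/- Let D be the smallest enclosing disk of a finite set S of points in the plane, with center c. If no two points of S on the boundary circle of D are antipodal (form a diameter), then there exist three points of S on the boundary circle of D such that c lies in the interior of the triangle they form. -/
noncomputable section Stmt4Aux

abbrev V2 := EuclideanSpace ℝ (Fin 2)

def cr (x y : V2) : ℝ := x 0 * y 1 - x 1 * y 0

lemma inner2 (x y : V2) : (inner ℝ x y : ℝ) = x 0 * y 0 + x 1 * y 1 := by
  simp [PiLp.inner_apply, Fin.sum_univ_two]; ring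

lemma norm2 (x : V2) : ‖x‖^2 = x 0^2 + x 1^2 := by
  rw [← real_inner_self_eq_norm_sq, inner2]; ring

lemma contin (i : Fin 2) : Continuous (fun y : V2 => y i) :=
  (EuclideanSpace.proj i).continuous

section Trig

lemma trig0 (r c2 s2 c3 s3 c s : ℝ) (hr : 0 < r)
    (h2 : c2^2+s2^2 = r^2) (h3 : c3^2+s3^2 = r^2) (he : c^2+s^2 = r^2)
    (hs2 : 0 < s2) (hs3 : s3 < 0) (h23 : c2*s3 - s2*c3 ≤ 0)
    (hs : 0 ≤ s) (hc : c2 ≤ c) : 0 ≤ (c2+c3)*c + (s2+s3)*s := by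
  have hQ : 0 ≤ r^2 + c2*c3 - s2*s3 := by linarith [sq_nonneg (c2+c3), sq_nonneg (s2-s3), h2, h3]
  have hP : 0 ≤ r^2 + c2*c3 + s2*s3 := by linarith [sq_nonneg (c2+c3), sq_nonneg (s2+s3), h2, h3]
  have hPe : 0 ≤ r^2 + c*c2 + s*s2 := by linarith [sq_nonneg (c+c2), sq_nonneg (s+s2), h2, he]
  have hK : 0 ≤ c2 + c3 := by
    have hid : (c2+c3)*((s2-s3)*r^2) = (s2*c3-c2*s3)*(r^2+c2*c3-s2*s3) := by
      linear_combination c3*s3*h2 - c2*s2*h3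
    nlinarith [mul_nonneg (show (0:ℝ) ≤ s2*c3-c2*s3 by linarith) hQ,
      mul_pos (show (0:ℝ) < s2-s3 by linarith) (pow_pos hr 2)]
  have hW : 0 ≤ c*s2 - s*c2 := by
    have hid : (c*s2-s*c2)*(s+s2) = (c-c2)*(r^2+c*c2+s*s2) := by
      linear_combination c*h2 - c2*he
    nlinarith [mul_nonneg (show (0:ℝ) ≤ c-c2 by linarith) hPe,
      (show (0:ℝ) < s+s2 by linarith)]
  have hfin : s2*((c2+c3)*c+(s2+s3)*s) = (c*s2-s*c2)*(c2+c3) + s*(r^2+c2*c3+s2*s3) := by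
    linear_combination s*h2
  nlinarith [mul_nonneg hW hK, mul_nonneg hs hP, hfin, hs2]

lemma trig (r a1 b1 a2 b2 a3 b3 a b : ℝ) (hr : 0 < r)
    (h1 : a1^2+b1^2 = r^2) (h2 : a2^2+b2^2 = r^2) (h3 : a3^2+b3^2 = r^2) (he : a^2+b^2 = r^2)
    (h12 : 0 < a1*b2 - b1*a2) (h13 : a1*b3 - b1*a3 < 0) (h23 : a2*b3 - b2*a3 ≤ 0)
    (hb : 0 ≤ a1*b - b1*a) (hmin : a1*a2+b1*b2 ≤ a1*a+b1*b) :
    0 ≤ (a2+a3)*a + (b2+b3)*b := by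
  have hr2 : (0:ℝ) < r^2 := pow_pos hr 2
  have hrne : r ≠ 0 := ne_of_gt hr
  have key := trig0 r ((a1*a2+b1*b2)/r) ((a1*b2-b1*a2)/r) ((a1*a3+b1*b3)/r) ((a1*b3-b1*a3)/r)
      ((a1*a+b1*b)/r) ((a1*b-b1*a)/r) hr
      (by field_simp; linear_combination (a2^2+b2^2)*h1 + r^2*h2)
      (by field_simp; linear_combination (a3^2+b3^2)*h1 + r^2*h3)
      (by field_simp; linear_combination (a^2+b^2)*h1 + r^2*he)
      (div_pos h12 hr) (div_neg_of_neg_of_pos h13 hr)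
      (by rw [div_mul_div_comm, div_mul_div_comm, div_sub_div_same]
          apply div_nonpos_of_nonpos_of_nonneg _ (by positivity)
          nlinarith [h23, hr2])
      (div_nonneg hb hr.le)
      ((div_le_div_iff_of_pos_right hr).mpr hmin)
  have hconv : ((a1*a2+b1*b2)/r + (a1*a3+b1*b3)/r) * ((a1*a+b1*b)/r)
      + ((a1*b2-b1*a2)/r + (a1*b3-b1*a3)/r) * ((a1*b-b1*a)/r)
      = ((a2+a3)*a + (b2+b3)*b) := by
    field_simp
    linear_combination ((a2+a3)*a + (b2+b3)*b) * h1
  linarith [key, hconv.symm.le]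

end Trig

/-- two vectors of norm `r` orthogonal to the same nonzero vector agree up to sign -/
lemma perp_eq {u x y : V2} {r : ℝ} (hr : 0 < r) (hu : u ≠ 0)
    (hx : (inner ℝ u x : ℝ) = 0) (hy : (inner ℝ u y : ℝ) = 0)
    (hnx : ‖x‖ = r) (hny : ‖y‖ = r) : y = x ∨ y = -x := by
  rw [inner2] at hx hy
  have hnx2 : x 0^2 + x 1^2 = r^2 := by rw [← norm2, hnx]
  have hny2 : y 0^2 + y 1^2 = r^2 := by rw [← norm2, hny]
  have hu' : u 0 ≠ 0 ∨ u 1 ≠ 0 := by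
    by_contra h
    push_neg at h
    apply hu
    ext i
    fin_cases i
    · exact h.1
    · exact h.2
  have hcross : x 0 * y 1 - x 1 * y 0 = 0 := by
    rcases hu' with h | h
    · have : u 0 * (x 0 * y 1 - x 1 * y 0) = 0 := by linear_combination (y 1)*hx - (x 1)*hy
      rcases mul_eq_zero.1 this with h' | h'
      · exact absurd h' h
      · exact h'
    · have : u 1 * (x 0 * y 1 - x 1 * y 0) = 0 := by linear_combination (x 0)*hy - (y 0)*hx
      rcases mul_eq_zero.1 this with h' | h'
      · exact absurd h' h
      · exact h'
  have hprod : ((y 0 - x 0)^2 + (y 1 - x 1)^2) * ((y 0 + x 0)^2 + (y 1 + x 1)^2) = 0 := by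
    linear_combination (x 0^2 + x 1^2 - y 0^2 - y 1^2) * hnx2
      - (x 0^2 + x 1^2 - y 0^2 - y 1^2) * hny2 + (4*(x 0 * y 1 - x 1 * y 0)) * hcross
  rcases mul_eq_zero.1 hprod with h | h
  · left
    have h0 : y 0 = x 0 := by nlinarith [sq_nonneg (y 0 - x 0), sq_nonneg (y 1 - x 1)]
    have h1 : y 1 = x 1 := by nlinarith [sq_nonneg (y 0 - x 0), sq_nonneg (y 1 - x 1)]
    ext i; fin_cases i
    · exact h0
    · exact h1
  · right
    have h0 : y 0 = -(x 0) := by nlinarith [sq_nonneg (y 0 + x 0), sq_nonneg (y 1 + x 1)]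
    have h1 : y 1 = -(x 1) := by nlinarith [sq_nonneg (y 0 + x 0), sq_nonneg (y 1 + x 1)]
    ext i; fin_cases i
    · simpa using h0
    · simpa using h1

/-- if every boundary point has positive inner ℝ product with `d`, the disk can be shrunk -/
lemma shrink {S : Finset V2} {c : V2} {r : ℝ} (hS : S.Nonempty) (hr : 0 < r)
    (henc : (S : Set V2) ⊆ Metric.closedBall c r)
    (hmin : ∀ c' r', (S : Set V2) ⊆ Metric.closedBall c' r' → r ≤ r')
    (d : V2) (hd : ∀ p ∈ S, dist c p = r → 0 < (inner ℝ d (p - c) : ℝ)) : False := by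
  classical
  set B := S.filter (fun p => dist c p = r) with hB
  set I := S.filter (fun p => dist c p ≠ r) with hI
  have hmB : ∃ m : ℝ, 0 < m ∧ ∀ p ∈ B, m ≤ (inner ℝ d (p - c) : ℝ) := by
    by_cases hBne : B.Nonempty
    · obtain ⟨p0, hp0, hminB⟩ := B.exists_min_image (fun p => (inner ℝ d (p - c) : ℝ)) hBne
      have hp0' := Finset.mem_filter.1 hp0
      exact ⟨_, hd p0 hp0'.1 hp0'.2, hminB⟩
    · exact ⟨1, one_pos, fun p hp => absurd ⟨p, hp⟩ hBne⟩
  have hMI : ∃ M : ℝ, M < r ∧ ∀ p ∈ I, dist c p ≤ M := by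
    by_cases hIne : I.Nonempty
    · obtain ⟨p0, hp0, hmaxI⟩ := I.exists_max_image (fun p => dist c p) hIne
      have hp0' := Finset.mem_filter.1 hp0
      have h1 : dist p0 c ≤ r := Metric.mem_closedBall.1 (henc hp0'.1)
      have : dist c p0 < r := lt_of_le_of_ne (by rwa [dist_comm] at h1) hp0'.2
      exact ⟨_, this, hmaxI⟩
    · exact ⟨0, hr, fun p hp => absurd ⟨p, hp⟩ hIne⟩
  obtain ⟨m, hm, hmle⟩ := hmB
  obtain ⟨M, hM, hMle⟩ := hMI
  set ε := min (m / (‖d‖^2 + 1)) ((r - M) / (‖d‖ + 1)) with hε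
  have hεpos : 0 < ε :=
    lt_min (div_pos hm (by positivity)) (div_pos (by linarith) (by positivity))
  set c' := c + ε • d with hc'
  have key : ∀ p ∈ S, dist c' p < r := by
    intro p hp
    by_cases hb : dist c p = r
    · have hnorm : ‖p - c‖ = r := by rw [← dist_eq_norm, dist_comm]; exact hb
      have hip : m ≤ (inner ℝ d (p - c) : ℝ) := hmle p (Finset.mem_filter.2 ⟨hp, hb⟩)
      have hdist : dist c' p = ‖(p - c) - ε • d‖ := by
        rw [dist_eq_norm, hc']
        rw [← norm_neg]
        congr 1
        abel
      have hsq : ‖(p - c) - ε • d‖^2 = r^2 - 2*ε*(inner ℝ d (p - c) : ℝ) + ε^2*‖d‖^2 := by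
        rw [norm_sub_sq_real, hnorm, real_inner_smul_right, real_inner_comm, norm_smul,
          Real.norm_eq_abs, abs_of_pos hεpos]
        ring
      have hεd : ε * (‖d‖^2 + 1) ≤ m := by
        have h1 : ε ≤ m / (‖d‖^2 + 1) := min_le_left _ _
        rwa [le_div_iff₀ (by positivity)] at h1
      have hlt : ‖(p - c) - ε • d‖^2 < r^2 := by
        rw [hsq]
        nlinarith [sq_nonneg ‖d‖, hεpos, hm, hip]
      rw [hdist]
      exact lt_of_pow_lt_pow_left₀ 2 hr.le hlt
    · have h1 : dist c p ≤ M := hMle p (Finset.mem_filter.2 ⟨hp, hb⟩)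
      have h2 : dist c' c = ε * ‖d‖ := by
        rw [hc', dist_eq_norm]
        simp [norm_smul, Real.norm_eq_abs, abs_of_pos hεpos]
      have h3 : ε * (‖d‖ + 1) ≤ r - M := by
        have := min_le_right (m / (‖d‖^2 + 1)) ((r - M) / (‖d‖ + 1))
        rwa [le_div_iff₀ (by positivity)] at this
      calc dist c' p ≤ dist c' c + dist c p := dist_triangle _ _ _
        _ ≤ ε * ‖d‖ + M := by rw [h2]; linarith
        _ < r := by nlinarith [hεpos]
  set r' := S.sup' hS (fun p => dist c' p) with hr'
  have hsub : (S : Set V2) ⊆ Metric.closedBall c' r' := by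
    intro p hp
    rw [Metric.mem_closedBall, dist_comm]
    exact Finset.le_sup' _ hp
  have hler : r ≤ r' := hmin c' r' hsub
  obtain ⟨p, hp, hps⟩ := S.exists_mem_eq_sup' hS (fun p => dist c' p)
  have := key p hp
  rw [← hps] at this
  linarith

lemma mem_interior_triangle {p q s x : V2} {α β γ : ℝ}
    (hα : 0 < α) (hβ : 0 < β) (hγ : 0 < γ) (hsum : α + β + γ = 1)
    (hx : x = α • p + β • q + γ • s) (hD : 0 < cr (q - p) (s - p)) :
    x ∈ interior (convexHull ℝ ({p, q, s} : Set V2)) := by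
  set D := cr (q - p) (s - p) with hDdef
  set f : V2 → ℝ := fun y => (q 0 - y 0) * (s 1 - y 1) - (q 1 - y 1) * (s 0 - y 0) with hf
  set g : V2 → ℝ := fun y => (s 0 - y 0) * (p 1 - y 1) - (s 1 - y 1) * (p 0 - y 0) with hg
  set h : V2 → ℝ := fun y => (p 0 - y 0) * (q 1 - y 1) - (p 1 - y 1) * (q 0 - y 0) with hh
  have hcontf : Continuous f := by
    apply Continuous.sub <;>
    exact Continuous.mul (Continuous.sub continuous_const (contin _))
      (Continuous.sub continuous_const (contin _))
  have hcontg : Continuous g := by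
    apply Continuous.sub <;>
    exact Continuous.mul (Continuous.sub continuous_const (contin _))
      (Continuous.sub continuous_const (contin _))
  have hconth : Continuous h := by
    apply Continuous.sub <;>
    exact Continuous.mul (Continuous.sub continuous_const (contin _))
      (Continuous.sub continuous_const (contin _))
  set O : Set V2 := {y | 0 < f y} ∩ {y | 0 < g y} ∩ {y | 0 < h y} with hO
  have hopen : IsOpen O :=
    ((isOpen_lt continuous_const hcontf).inter (isOpen_lt continuous_const hcontg)).inter
      (isOpen_lt continuous_const hconth)
  have hDsum : ∀ y : V2, f y + g y + h y = D := by
    intro y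
    simp only [hf, hg, hh, hDdef, cr, PiLp.sub_apply]
    ring
  have hbar : ∀ y : V2, ∀ i : Fin 2, D * y i = f y * p i + g y * q i + h y * s i := by
    intro y i
    fin_cases i <;>
    · simp only [hf, hg, hh, hDdef, cr, PiLp.sub_apply, Fin.zero_eta, Fin.mk_one, Fin.isValue]
      ring
  have hsubO : O ⊆ convexHull ℝ ({p, q, s} : Set V2) := by
    intro y hy
    obtain ⟨⟨hy1, hy2⟩, hy3⟩ := hy
    have hDy : f y + g y + h y = D := hDsum y
    have hconv : Convex ℝ (convexHull ℝ ({p, q, s} : Set V2)) := convex_convexHull ℝ _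
    have hyeq : y = (f y / D) • p + (g y / D) • q + (h y / D) • s := by
      ext i
      have hb := hbar y i
      simp only [PiLp.add_apply, PiLp.smul_apply, smul_eq_mul]
      field_simp
      linarith [hbar y i]
    have hsum3 : ∑ i : Fin 3, (![f y / D, g y / D, h y / D] : Fin 3 → ℝ) i = 1 := by
      simp only [Fin.sum_univ_three, Matrix.cons_val_zero, Matrix.cons_val_one, Matrix.head_cons,
        Matrix.cons_val_two, Matrix.tail_cons]
      field_simp
      linarith [hDy]
    have hmem := hconv.sum_mem (t := (Finset.univ : Finset (Fin 3)))
      (w := ![f y / D, g y / D, h y / D]) (z := ![p, q, s])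
      (fun i _ => by
        fin_cases i
        · simpa using div_nonneg (le_of_lt hy1) hD.le
        · simpa using div_nonneg (le_of_lt hy2) hD.le
        · simpa using div_nonneg (le_of_lt hy3) hD.le)
      hsum3
      (fun i _ => by
        fin_cases i
        · simpa using subset_convexHull ℝ ({p, q, s} : Set V2) (by simp)
        · simpa using subset_convexHull ℝ ({p, q, s} : Set V2) (by simp)
        · simpa using subset_convexHull ℝ ({p, q, s} : Set V2) (by simp))
    rw [hyeq]
    simpa [Fin.sum_univ_three] using hmem
  have hxO : x ∈ O := by
    have hx0 : x 0 = α * p 0 + β * q 0 + γ * s 0 := by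
      rw [hx]; simp [PiLp.add_apply, PiLp.smul_apply]
    have hx1 : x 1 = α * p 1 + β * q 1 + γ * s 1 := by
      rw [hx]; simp [PiLp.add_apply, PiLp.smul_apply]
    have hαs : α = 1 - β - γ := by linarith
    refine ⟨⟨?_, ?_⟩, ?_⟩
    · show 0 < f x
      have : f x = α * D := by
        simp only [hf, hDdef, cr, PiLp.sub_apply, hx0, hx1, hαs]
        ring
      rw [this]; exact mul_pos hα hD
    · show 0 < g x
      have : g x = β * D := by
        simp only [hg, hDdef, cr, PiLp.sub_apply, hx0, hx1, hαs]
        ring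
      rw [this]; exact mul_pos hβ hD
    · show 0 < h x
      have : h x = γ * D := by
        simp only [hh, hDdef, cr, PiLp.sub_apply, hx0, hx1, hαs]
        ring
      rw [this]; exact mul_pos hγ hD
  exact mem_interior.2 ⟨O, hsubO, hopen, hxO⟩

/-- key spanning property of boundary points of the minimal enclosing disk -/
lemma star {S : Finset V2} {c : V2} {r : ℝ} (hS : S.Nonempty) (hr : 0 < r)
    (henc : (S : Set V2) ⊆ Metric.closedBall c r)
    (hmin : ∀ c' r', (S : Set V2) ⊆ Metric.closedBall c' r' → r ≤ r')
    (hnodiam : ∀ p ∈ S, ∀ q ∈ S, dist c p = r → dist c q = r → dist p q ≠ 2 * r)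
    (u : V2) (hu : u ≠ 0) : ∃ p ∈ S, dist c p = r ∧ 0 < (inner ℝ u (p - c) : ℝ) := by
  classical
  by_contra hcon
  push_neg at hcon
  have hnorm : ∀ p ∈ S, dist c p = r → ‖p - c‖ = r := by
    intro p _ h; rw [← dist_eq_norm, dist_comm]; exact h
  by_cases hz : ∃ p0 ∈ S, dist c p0 = r ∧ (inner ℝ u (p0 - c) : ℝ) = 0
  · obtain ⟨p0, hp0S, hp0r, hp0z⟩ := hz
    have huniq : ∀ p ∈ S, dist c p = r → (inner ℝ u (p - c) : ℝ) = 0 → p = p0 := by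
      intro p hp hpr hpz
      rcases perp_eq hr hu hp0z hpz (hnorm p0 hp0S hp0r) (hnorm p hp hpr) with h | h
      · exact sub_left_injective h
      · exfalso
        have hq : p - p0 = (-2 : ℝ) • (p0 - c) := by
          have : p - p0 = (p - c) - (p0 - c) := by abel
          rw [this, h]
          module
        have : dist p p0 = 2 * r := by
          rw [dist_eq_norm, hq, norm_smul, Real.norm_eq_abs, hnorm p0 hp0S hp0r]
          norm_num
        exact hnodiam p hp p0 hp0S hpr hp0r this
    have hmgood : ∃ m : ℝ, 0 < m ∧
        ∀ p ∈ S, dist c p = r → p ≠ p0 → m ≤ -(inner ℝ u (p - c) : ℝ) := by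
      by_cases hne : ((S.filter fun p => dist c p = r).erase p0).Nonempty
      · obtain ⟨pm, hpm, hminm⟩ :=
          Finset.exists_min_image _ (fun p => -(inner ℝ u (p - c) : ℝ)) hne
        have hpm1 : pm ≠ p0 := (Finset.mem_erase.1 hpm).1
        have hpm2 := Finset.mem_filter.1 (Finset.mem_erase.1 hpm).2
        have hlt : (inner ℝ u (pm - c) : ℝ) < 0 :=
          lt_of_le_of_ne (hcon pm hpm2.1 hpm2.2)
            (fun h => hpm1 (huniq pm hpm2.1 hpm2.2 h))
        refine ⟨-(inner ℝ u (pm - c) : ℝ), by linarith, ?_⟩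
        intro p hp hpr hpne
        exact hminm p (Finset.mem_erase.2 ⟨hpne, Finset.mem_filter.2 ⟨hp, hpr⟩⟩)
      · refine ⟨1, one_pos, ?_⟩
        intro p hp hpr hpne
        exact absurd ⟨p, Finset.mem_erase.2 ⟨hpne, Finset.mem_filter.2 ⟨hp, hpr⟩⟩⟩ hne
    obtain ⟨m, hm0, hmle⟩ := hmgood
    set δ := m / (r^2 + r^2) with hδ
    have hδ0 : 0 < δ := div_pos hm0 (by positivity)
    have hδr : δ * (r * r) < m := by
      have : δ * (r * r) = m / 2 := by
        rw [hδ]; field_simp; ring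
      rw [this]; linarith
    apply shrink hS hr henc hmin (-u + δ • (p0 - c))
    intro p hp hpr
    have hexp : (inner ℝ (-u + δ • (p0 - c)) (p - c) : ℝ)
        = -(inner ℝ u (p - c) : ℝ) + δ * (inner ℝ (p0 - c) (p - c) : ℝ) := by
      rw [inner_add_left, inner_neg_left, real_inner_smul_left]
    rw [hexp]
    by_cases hpe : p = p0
    · subst hpe
      have : (inner ℝ (p - c) (p - c) : ℝ) = r^2 := by
        rw [real_inner_self_eq_norm_sq, hnorm p hp hpr]
      rw [hp0z, this]
      nlinarith [hδ0, pow_pos hr 2]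
    · have hm' := hmle p hp hpr hpe
      have hcs : -(r * r) ≤ (inner ℝ (p0 - c) (p - c) : ℝ) := by
        have h1 := abs_real_inner_le_norm (p0 - c) (p - c)
        rw [hnorm p0 hp0S hp0r, hnorm p hp hpr] at h1
        linarith [neg_abs_le (inner ℝ (p0 - c) (p - c) : ℝ)]
      have := mul_le_mul_of_nonneg_left hcs hδ0.le
      linarith
  · push_neg at hz
    apply shrink hS hr henc hmin (-u)
    intro p hp hpr
    rw [inner_neg_left]
    have := lt_of_le_of_ne (hcon p hp hpr) (hz p hp hpr)
    linarith

end Stmt4Aux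


set_option maxHeartbeats 2000000 in
/-- Let the closed ball `B(c, r)` be the smallest enclosing disk of a finite
set `S` of at least three points (with `r > 0`). If no two points of `S` on the boundary
circle are antipodal, then there are three boundary points of `S` whose triangle contains
`c` in its interior. -/
theorem stmt4 (S : Finset (EuclideanSpace ℝ (Fin 2))) (hcard : 3 ≤ S.card)
    (c : EuclideanSpace ℝ (Fin 2)) (r : ℝ) (hr : 0 < r)
    (henc : (S : Set (EuclideanSpace ℝ (Fin 2))) ⊆ Metric.closedBall c r)
    (hmin : ∀ (c' : EuclideanSpace ℝ (Fin 2)) (r' : ℝ),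
      (S : Set (EuclideanSpace ℝ (Fin 2))) ⊆ Metric.closedBall c' r' → r ≤ r')
    (hnodiam : ∀ p ∈ S, ∀ q ∈ S, dist c p = r → dist c q = r → dist p q ≠ 2 * r) :
    ∃ p ∈ S, ∃ q ∈ S, ∃ s ∈ S, dist c p = r ∧ dist c q = r ∧ dist c s = r ∧
      c ∈ interior (convexHull ℝ ({p, q, s} : Set (EuclideanSpace ℝ (Fin 2)))) := by
  classical
  have hS : S.Nonempty := Finset.card_pos.1 (by omega)
  have hstar := fun u hu => star hS hr henc hmin hnodiam u hu
  have hnorm : ∀ p ∈ S, dist c p = r → ‖p - c‖ = r := by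
    intro p _ h; rw [← dist_eq_norm, dist_comm]; exact h
  -- first point
  have hone : (!₂[1, 0] : V2) ≠ 0 := fun h => by simpa using congrArg (fun v : V2 => v 0) h
  obtain ⟨p1, hp1S, hp1r, -⟩ := hstar !₂[1, 0] hone
  set e1 := p1 - c with he1
  have hne1 : ‖e1‖ = r := hnorm p1 hp1S hp1r
  have sq1 : e1 0^2 + e1 1^2 = r^2 := by rw [← norm2, hne1]
  have he1ne : e1 ≠ 0 := by
    intro h; rw [h] at hne1; simp at hne1; exact absurd hne1.symm (ne_of_gt hr)
  -- rotated vector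
  set J : V2 := !₂[-(e1 1), e1 0] with hJ
  have hJinner : ∀ y : V2, (inner ℝ J y : ℝ) = cr e1 y := by
    intro y; rw [inner2]; show -(e1 1) * y 0 + e1 0 * y 1 = _; simp [cr]; ring
  have hJne : J ≠ 0 := by
    intro h
    apply he1ne
    ext i; fin_cases i
    · have h1 := congrArg (fun v : V2 => v 1) h
      rw [hJ] at h1
      simpa using h1
    · have h0 := congrArg (fun v : V2 => v 0) h
      rw [hJ] at h0
      simpa using h0
  -- upper point p2
  set U := S.filter (fun p => dist c p = r ∧ 0 < cr e1 (p - c)) with hU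
  have hUne : U.Nonempty := by
    obtain ⟨q, hq, hqr, hqi⟩ := hstar J hJne
    exact ⟨q, Finset.mem_filter.2 ⟨hq, hqr, by rwa [hJinner] at hqi⟩⟩
  obtain ⟨p2, hp2U, hp2min⟩ := U.exists_min_image (fun p => (inner ℝ e1 (p - c) : ℝ)) hUne
  obtain ⟨hp2S, hp2r, hp2cr⟩ := Finset.mem_filter.1 hp2U
  set e2 := p2 - c with he2
  have hne2 : ‖e2‖ = r := hnorm p2 hp2S hp2r
  have sq2 : e2 0^2 + e2 1^2 = r^2 := by rw [← norm2, hne2]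
  -- lower point p3
  set L := S.filter (fun p => dist c p = r ∧ cr e1 (p - c) < 0) with hL
  have hLne : L.Nonempty := by
    obtain ⟨q, hq, hqr, hqi⟩ := hstar (-J) (neg_ne_zero.2 hJne)
    rw [inner_neg_left, hJinner] at hqi
    exact ⟨q, Finset.mem_filter.2 ⟨hq, hqr, by linarith⟩⟩
  obtain ⟨p3, hp3U, hp3min⟩ := L.exists_min_image (fun p => (inner ℝ e1 (p - c) : ℝ)) hLne
  obtain ⟨hp3S, hp3r, hp3cr⟩ := Finset.mem_filter.1 hp3U
  set e3 := p3 - c with he3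
  have hne3 : ‖e3‖ = r := hnorm p3 hp3S hp3r
  have sq3 : e3 0^2 + e3 1^2 = r^2 := by rw [← norm2, hne3]
  -- key positivity
  have hkey : 0 < cr e2 e3 := by
    by_contra hle
    push_neg at hle
    have hsum_ne : e2 + e3 ≠ 0 := by
      intro h
      have h3 : e3 = -e2 := eq_neg_of_add_eq_zero_right h
      have hq : p2 - p3 = (2 : ℝ) • e2 := by
        have h23 : p2 - p3 = e2 - e3 := by rw [he2, he3]; abel
        rw [h23, h3]; module
      have : dist p2 p3 = 2 * r := by
        rw [dist_eq_norm, hq, norm_smul, Real.norm_eq_abs, hne2]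
        norm_num
      exact hnodiam p2 hp2S p3 hp3S hp2r hp3r this
    obtain ⟨q, hqS, hqr, hqpos⟩ := hstar (-(e2 + e3)) (neg_ne_zero.2 hsum_ne)
    set ev := q - c with heq
    have hneq : ‖ev‖ = r := hnorm q hqS hqr
    have sqq : ev 0^2 + ev 1^2 = r^2 := by rw [← norm2, hneq]
    have hqneg : (inner ℝ (e2 + e3) ev : ℝ) < 0 := by
      rw [inner_neg_left] at hqpos; linarith
    have hqexp : (inner ℝ (e2 + e3) ev : ℝ) = (e2 0 + e3 0) * ev 0 + (e2 1 + e3 1) * ev 1 := by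
      rw [inner2]
      simp [PiLp.add_apply]
    rcases lt_trichotomy (cr e1 ev) 0 with hc3 | hc3 | hc3
    · -- q in lower half : use minimality of p3, reflected trig
      have hminq : (inner ℝ e1 e3 : ℝ) ≤ (inner ℝ e1 ev : ℝ) :=
        hp3min q (Finset.mem_filter.2 ⟨hqS, hqr, hc3⟩)
      rw [inner2, inner2] at hminq
      have htr := trig r (e1 0) (-(e1 1)) (e3 0) (-(e3 1)) (e2 0) (-(e2 1)) (ev 0) (-(ev 1)) hr
        (by linear_combination sq1) (by linear_combination sq3) (by linear_combination sq2)
        (by linear_combination sqq)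
        (by simp only [cr] at hp3cr; linarith [hp3cr])
        (by simp only [cr] at hp2cr; linarith [hp2cr])
        (by simp only [cr] at hle; linarith [hle])
        (by simp only [cr] at hc3; linarith [hc3])
        (by linarith [hminq])
      rw [hqexp] at hqneg
      linarith [htr]
    · -- cr e1 ev = 0 : ev = ± e1
      have hJe1 : (inner ℝ J e1 : ℝ) = 0 := by rw [hJinner]; simp [cr]; ring
      have hJeq : (inner ℝ J ev : ℝ) = 0 := by rw [hJinner]; exact hc3
      rcases perp_eq hr hJne hJe1 hJeq hne1 hneq with h | h
      · -- ev = e1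
        have hminq : (inner ℝ e1 e2 : ℝ) ≤ (inner ℝ e1 e1 : ℝ) := by
          have h1 := real_inner_le_norm e1 e2
          rw [hne1, hne2] at h1
          rw [real_inner_self_eq_norm_sq, hne1]
          nlinarith [h1]
        rw [inner2, inner2] at hminq
        have htr := trig r (e1 0) (e1 1) (e2 0) (e2 1) (e3 0) (e3 1) (e1 0) (e1 1) hr
          sq1 sq2 sq3 sq1
          (by simpa [cr] using hp2cr)
          (by simpa [cr] using hp3cr)
          (by simpa [cr] using hle)
          (by nlinarith)
          (by linarith [hminq])
        rw [hqexp, h] at hqneg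
        linarith [htr]
      · -- ev = -e1 : antipodal with p1
        have hq : q - p1 = (-2 : ℝ) • e1 := by
          have h1 : q - p1 = ev - e1 := by rw [heq, he1]; abel
          rw [h1, h]; module
        have : dist q p1 = 2 * r := by
          rw [dist_eq_norm, hq, norm_smul, Real.norm_eq_abs, hne1]
          norm_num
        exact hnodiam q hqS p1 hp1S hqr hp1r this
    · -- q in upper half : minimality of p2, direct trig
      have hminq : (inner ℝ e1 e2 : ℝ) ≤ (inner ℝ e1 ev : ℝ) :=
        hp2min q (Finset.mem_filter.2 ⟨hqS, hqr, hc3⟩)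
      rw [inner2, inner2] at hminq
      have htr := trig r (e1 0) (e1 1) (e2 0) (e2 1) (e3 0) (e3 1) (ev 0) (ev 1) hr
        sq1 sq2 sq3 sqq
        (by simpa [cr] using hp2cr)
        (by simpa [cr] using hp3cr)
        (by simpa [cr] using hle)
        (by simp only [cr] at hc3; linarith [hc3])
        (by linarith [hminq])
      rw [hqexp] at hqneg
      linarith [htr]
  -- assemble the triangle
  have hA : 0 < cr e2 e3 := hkey
  have hB : 0 < -(cr e1 e3) := by simpa [cr] using hp3cr
  have hC : 0 < cr e1 e2 := hp2cr
  set A := cr e2 e3 with hAd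
  set B := -(cr e1 e3) with hBd
  set C := cr e1 e2 with hCd
  set T := A + B + C with hTd
  have hT : 0 < T := by positivity
  have hTne : T ≠ 0 := ne_of_gt hT
  have hcomp : ∀ i : Fin 2, T * c i = A * p1 i + B * p2 i + C * p3 i := by
    intro i
    fin_cases i <;>
    · simp only [hTd, hAd, hBd, hCd, cr, he1, he2, he3, PiLp.sub_apply,
        Fin.zero_eta, Fin.mk_one, Fin.isValue]
      ring
  have hceq : c = (A/T) • p1 + (B/T) • p2 + (C/T) • p3 := by
    ext i
    have h := hcomp i
    simp only [PiLp.add_apply, PiLp.smul_apply, smul_eq_mul]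
    field_simp
    linarith [hcomp i]
  have hD : 0 < cr (p2 - p1) (p3 - p1) := by
    have hDe : cr (p2 - p1) (p3 - p1) = A + B + C := by
      simp only [hAd, hBd, hCd, cr, he1, he2, he3, PiLp.sub_apply]
      ring
    rw [hDe]
    exact hT
  refine ⟨p1, hp1S, p2, hp2S, p3, hp3S, hp1r, hp2r, hp3r, ?_⟩
  exact mem_interior_triangle (div_pos hA hT) (div_pos hB hT) (div_pos hC hT)
    (by field_simp; rw [hTd]) hceq hD
end

section
/- In the regular (2k+1)-gon with k ≥ 2, edge length 2, and edge e₀ horizontal at the bottom, the perpendicular slab of e₀ (the set of points of the polygon whose orthogonal projection onto the line through e₀ lies within e₀) contains the upper half of edge e_{k+1}, i.e., contains the closed segment from the midpoint of e_{k+1} to its endpoint v_{k+1}. -/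
open Real

/-- In the regular `(2k+1)`-gon with `k ≥ 2`, edge length 2, edge `e₀`
horizontal at the bottom (vertices `v i` on the circumcircle of radius `R = 1/sin(π/n)`
centered at the origin at angles `θ i = -π/2 - π/n + 2πi/n`, `n = 2k+1`), the
perpendicular slab of `e₀` contains the upper half of edge `e_{k+1}`: for every point `p`
of the segment from the midpoint of `e_{k+1}` to `v_{k+1}`, the orthogonal projection of
`p` onto the (horizontal) line through `e₀` lies in the closed segment `e₀`. -/
theorem stmt10 (k : ℕ) (hk : 2 ≤ k) (n : ℕ) (hn : n = 2 * k + 1)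
    (R : ℝ) (hR : R = 1 / Real.sin (π / n))
    (θ : ℕ → ℝ) (hθ : ∀ i, θ i = -(π / 2) - π / n + 2 * π * i / n)
    (v : ℕ → ℝ × ℝ) (hv : ∀ i, v i = (R * Real.cos (θ i), R * Real.sin (θ i))) :
    ∀ p ∈ segment ℝ (midpoint ℝ (v (k + 1)) (v (k + 2))) (v (k + 1)),
      (p.1, (v 0).2) ∈ segment ℝ (v 0) (v 1) := by
  intro p hp
  set x := π / n with hxdef
  have hncast : (n : ℝ) = 2 * k + 1 := by rw [hn]; push_cast; ring
  have hn5 : (5 : ℝ) ≤ n := by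
    rw [hncast]
    have : (2 : ℝ) ≤ k := by exact_mod_cast hk
    linarith
  have hnpos : (0 : ℝ) < n := by linarith
  have hxpos : 0 < x := div_pos pi_pos hnpos
  have hxle : x ≤ π / 2 := by
    rw [hxdef]
    apply div_le_div_of_nonneg_left pi_pos.le (by norm_num) (by linarith)
  have hxlt : x < π := lt_of_le_of_lt hxle (by linarith [pi_pos])
  have hs : 0 < Real.sin x := Real.sin_pos_of_pos_of_lt_pi hxpos hxlt
  have hc0 : 0 ≤ Real.cos x := Real.cos_nonneg_of_mem_Icc ⟨by linarith, hxle⟩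
  have hc1 : Real.cos x ≤ 1 := Real.cos_le_one x
  -- angles
  have hθ0 : θ 0 = -(π / 2 + x) := by rw [hθ]; push_cast; rw [hxdef]; ring
  have hθ1 : θ 1 = x - π / 2 := by
    rw [hθ]; push_cast; rw [hxdef]; field_simp; ring
  have hθk1 : θ (k + 1) = π / 2 := by
    rw [hθ]; push_cast
    rw [hxdef]
    field_simp
    rw [hncast]; ring
  have hθk2 : θ (k + 2) = π / 2 + 2 * x := by
    rw [hθ]; push_cast
    rw [hxdef]
    field_simp
    rw [hncast]; ring
  -- coordinates
  have hRs : R * Real.sin x = 1 := by rw [hR, hxdef]; field_simp; exact div_self hs.ne'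
  have hv0 : (v 0).1 = -1 := by
    rw [hv, hθ0]
    simp [Real.cos_add]
    nlinarith [hRs]
  have hv1 : (v 1).1 = 1 := by
    rw [hv, hθ1]
    rw [Real.cos_sub]
    simp
    nlinarith [hRs]
  have hsnd : (v 1).2 = (v 0).2 := by
    rw [hv, hv, hθ0, hθ1]
    simp [Real.sin_sub, Real.sin_add]
  have hvk1 : (v (k + 1)).1 = 0 := by rw [hv, hθk1]; simp
  have hvk2 : (v (k + 2)).1 = -2 * Real.cos x := by
    rw [hv, hθk2]
    rw [Real.cos_add, Real.sin_two_mul]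
    simp
    nlinarith [hRs]
  have hM : (midpoint ℝ (v (k + 1)) (v (k + 2))).1 = -Real.cos x := by
    rw [midpoint_eq_smul_add]
    simp [Prod.fst_add, Prod.smul_fst, hvk1, hvk2]
  -- p.1 bounds
  obtain ⟨a, b, ha, hb, hab, hpeq⟩ := hp
  have hp1 : p.1 = a * (-Real.cos x) := by
    have := congrArg Prod.fst hpeq
    simp [Prod.fst_add, Prod.smul_fst, hM, hvk1] at this
    linarith [this]
  have hac1 : a * Real.cos x ≤ 1 := mul_le_one₀ (by linarith) hc0 hc1
  have hac0 : 0 ≤ a * Real.cos x := mul_nonneg ha hc0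
  have hlb : -1 ≤ p.1 := by rw [hp1]; linarith
  have hub : p.1 ≤ 1 := by rw [hp1]; linarith
  -- membership
  have e0 : v 0 = ((-1 : ℝ), (v 0).2) := by
    ext
    · exact hv0
    · rfl
  have e1 : v 1 = ((1 : ℝ), (v 0).2) := by
    ext
    · exact hv1
    · exact hsnd
  refine ⟨(1 - p.1) / 2, (1 + p.1) / 2, by linarith, by linarith, by ring, ?_⟩
  rw [e0, e1, Prod.smul_mk, Prod.smul_mk, Prod.mk_add_mk]
  simp only [smul_eq_mul, Prod.mk.injEq]
  constructor <;> ring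
end

section
/- Let P be a convex polygon inscribed in a circle C centered at c, and suppose vertices v_i and v_j of P are antipodal on C (v_i v_j is a diameter). Orient so that the segment v_i v_j is vertical with v_i below. Then the boundary chain of P from v_i counterclockwise to v_j is self-approaching from v_j to v_i: for any three points x, y, z occurring in this order along the chain traversed from v_j to v_i, dist(x, z) ≥ dist(y, z). -/
open scoped RealInnerProductSpace
open Set Metric

/-- In 2D, the kernel of the functional `⟪·, n⟫` is spanned by any nonzero vector in it. -/
lemma ker1 {n d v : EuclideanSpace ℝ (Fin 2)} (hn : n ≠ 0) (hd : d ≠ 0)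
    (hdn : ⟪d, n⟫ = 0) (hvn : ⟪v, n⟫ = 0) : ∃ t : ℝ, v = t • d := by
  have hdn' : d 0 * n 0 + d 1 * n 1 = 0 := by
    have h := hdn; simp [PiLp.inner_apply, Fin.sum_univ_two] at h; linear_combination h
  have hvn' : v 0 * n 0 + v 1 * n 1 = 0 := by
    have h := hvn; simp [PiLp.inner_apply, Fin.sum_univ_two] at h; linear_combination h
  have hncoord : n 0 ≠ 0 ∨ n 1 ≠ 0 := by
    by_contra h
    push_neg at h
    exact hn (by ext i; fin_cases i <;> simp [h.1, h.2])
  have hcross : v 1 * d 0 - v 0 * d 1 = 0 := by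
    rcases hncoord with h | h
    · have h0 : (v 1 * d 0 - v 0 * d 1) * n 0 = 0 := by
        linear_combination v 1 * hdn' - d 1 * hvn'
      rcases mul_eq_zero.mp h0 with h' | h'
      · exact h'
      · exact absurd h' h
    · have h0 : (v 1 * d 0 - v 0 * d 1) * n 1 = 0 := by
        linear_combination d 0 * hvn' - v 0 * hdn'
      rcases mul_eq_zero.mp h0 with h' | h'
      · exact h'
      · exact absurd h' h
  have hdcoord : d 0 ≠ 0 ∨ d 1 ≠ 0 := by
    by_contra h
    push_neg at h
    exact hd (by ext i; fin_cases i <;> simp [h.1, h.2])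
  rcases hdcoord with h | h
  · refine ⟨v 0 / d 0, ?_⟩
    ext i; fin_cases i
    · show v 0 = v 0 / d 0 * d 0
      field_simp
    · show v 1 = v 0 / d 0 * d 1
      field_simp
      linarith [hcross]
  · refine ⟨v 1 / d 1, ?_⟩
    ext i; fin_cases i
    · show v 0 = v 1 / d 1 * d 0
      field_simp
      linarith [hcross]
    · show v 1 = v 1 / d 1 * d 1
      field_simp

/-- the real-arithmetic core of the sub-segment lemma, assuming `a ≤ b` -/
lemma subseg_real_aux {a b N m D : ℝ} (ha : 0 ≤ a) (hb1 : b ≤ 1) (hab : a ≤ b)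
    (hN : 0 ≤ N) (hD : 0 ≤ D) (hC : m * m ≤ N * D)
    (h1 : N - (a + b) * m + a * b * D ≤ 0)
    (h3 : 0 ≤ N - 2 * b * m + b ^ 2 * D) : N ≤ m := by
  have hb : 0 ≤ b := le_trans ha hab
  rcases le_or_gt (a + b) 1 with hc | hc
  · rcases eq_or_lt_of_le (by positivity : (0:ℝ) ≤ a + b) with h0 | h0
    · have ha0 : a = 0 := by linarith
      have hb0 : b = 0 := by linarith
      subst ha0; subst hb0
      simp at h1
      nlinarith [hC, hN, hD]
    · have h5 : (a + b) * (N - m) ≤ 0 := by nlinarith [mul_nonneg (mul_nonneg ha hb) hD]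
      nlinarith [h5, h0]
  · rcases eq_or_lt_of_le hab with heq | hlt
    · subst heq
      have he : N = 2 * a * m - a ^ 2 * D := by nlinarith [h1, h3]
      have h6 : (m - a * D) * (m - a * D) ≤ 0 := by nlinarith [hC, he]
      have h7 : m = a * D := by nlinarith [h6]
      rw [he, h7]
      nlinarith [mul_nonneg (mul_nonneg ha (by linarith : (0:ℝ) ≤ 1 - a)) hD]
    · have key : 0 ≤ (b - a) * (b * D - m) := by nlinarith [h1, h3]
      have hm : m ≤ b * D := by nlinarith [key, mul_pos (sub_pos.2 hlt) (sub_pos.2 hlt)]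
      have s1 : (a + b - 1) * m ≤ (a + b - 1) * (b * D) :=
        mul_le_mul_of_nonneg_left hm (by linarith)
      nlinarith [h1, s1, mul_nonneg (mul_nonneg hb (sub_nonneg.2 hb1)) hD]

/-- the real-arithmetic core of the sub-segment lemma -/
lemma subseg_real {a b N m D : ℝ} (ha : 0 ≤ a) (ha1 : a ≤ 1) (hb : 0 ≤ b) (hb1 : b ≤ 1)
    (hN : 0 ≤ N) (hD : 0 ≤ D) (hC : m * m ≤ N * D)
    (h1 : N - (a + b) * m + a * b * D ≤ 0)
    (h2 : 0 ≤ N - 2 * a * m + a ^ 2 * D)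
    (h3 : 0 ≤ N - 2 * b * m + b ^ 2 * D) : N ≤ m := by
  rcases le_total a b with hab | hab
  · exact subseg_real_aux ha hb1 hab hN hD hC h1 h3
  · exact subseg_real_aux hb ha1 hab hN hD hC (by nlinarith [h1]) h2

/-- Sub-segment lemma: if `v` sees the sub-segment `[p,q]` of `[x,z]` at an obtuse angle,
it sees `[x,z]` at an obtuse angle. -/
lemma subseg {x z v p q : EuclideanSpace ℝ (Fin 2)} {s1 s2 : ℝ}
    (hs1 : 0 ≤ s1) (hs1' : s1 ≤ 1) (hs2 : 0 ≤ s2) (hs2' : s2 ≤ 1)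
    (hp : p = x + s1 • (z - x)) (hq : q = x + s2 • (z - x))
    (h : ⟪v - p, v - q⟫ ≤ 0) : ⟪v - x, v - z⟫ ≤ 0 := by
  have hvp : v - p = (v - x) - s1 • (z - x) := by rw [hp]; abel
  have hvq : v - q = (v - x) - s2 • (z - x) := by rw [hq]; abel
  have hvz : v - z = (v - x) - (z - x) := by abel
  set w := v - x with hw
  set d := z - x with hd
  have hcomm : ⟪d, w⟫ = ⟪w, d⟫ := real_inner_comm _ _
  have e1 : ⟪v - p, v - q⟫ = ⟪w, w⟫ - (s1 + s2) * ⟪w, d⟫ + s1 * s2 * ⟪d, d⟫ := by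
    rw [hvp, hvq]
    simp only [inner_sub_left, inner_sub_right, real_inner_smul_left, real_inner_smul_right,
      hcomm]
    ring
  have e2 : ⟪v - p, v - p⟫ = ⟪w, w⟫ - 2 * s1 * ⟪w, d⟫ + s1 ^ 2 * ⟪d, d⟫ := by
    rw [hvp]
    simp only [inner_sub_left, inner_sub_right, real_inner_smul_left, real_inner_smul_right,
      hcomm]
    ring
  have e3 : ⟪v - q, v - q⟫ = ⟪w, w⟫ - 2 * s2 * ⟪w, d⟫ + s2 ^ 2 * ⟪d, d⟫ := by
    rw [hvq]
    simp only [inner_sub_left, inner_sub_right, real_inner_smul_left, real_inner_smul_right,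
      hcomm]
    ring
  rw [hvz, inner_sub_right]
  have hcs := real_inner_mul_inner_self_le w d
  have hfin := subseg_real (a := s1) (b := s2) (N := ⟪w, w⟫) (m := ⟪w, d⟫) (D := ⟪d, d⟫)
    hs1 hs1' hs2 hs2' real_inner_self_nonneg real_inner_self_nonneg hcs
    (by rw [← e1]; exact h)
    (by rw [← e2]; exact real_inner_self_nonneg)
    (by rw [← e3]; exact real_inner_self_nonneg)
  linarith

/-- If `v` is close to `q`, on the `p`-side of the level line of `q`, then `v ∈ P`. -/
lemma mem_of_near {P : Set (EuclideanSpace ℝ (Fin 2))} (hP : Convex ℝ P)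
    {a b p n q v : EuclideanSpace ℝ (Fin 2)}
    (ha : a ∈ P) (hb : b ∈ P) (hp : p ∈ P)
    (hab : b ≠ a) (hlev : ⟪b - a, n⟫ = 0) (hn : n ≠ 0)
    {s : ℝ} (hs0 : 0 < s) (hs1 : s < 1) (hq : q = a + s • (b - a))
    (hG : 0 < ⟪p - q, n⟫)
    (hvF : 0 ≤ ⟪v - q, n⟫)
    (hv1 : 2 * (‖v - q‖ * ‖n‖) ≤ ⟪p - q, n⟫)
    (hv2 : 4 * ((⟪p - q, n⟫ + ‖p - q‖ * ‖n‖) * ‖v - q‖) ≤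
      (min s (1 - s)) * (‖b - a‖ * ⟪p - q, n⟫)) :
    v ∈ P := by
  have hFb : ⟪v - q, n⟫ ≤ ‖v - q‖ * ‖n‖ := real_inner_le_norm _ _
  obtain ⟨μ, hμdef⟩ : ∃ m : ℝ, m = ⟪v - q, n⟫ / ⟪p - q, n⟫ := ⟨_, rfl⟩
  have hμ0 : 0 ≤ μ := hμdef ▸ div_nonneg hvF hG.le
  have hμh : μ ≤ 1/2 := by
    rw [hμdef, div_le_iff₀ hG]
    nlinarith [hFb, hv1]
  have h1μ : (1:ℝ)/2 ≤ 1 - μ := by linarith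
  have h1μ0 : 1 - μ ≠ 0 := by intro h; rw [h] at h1μ; linarith
  have hμG : μ * ⟪p - q, n⟫ = ⟪v - q, n⟫ := by rw [hμdef]; exact div_mul_cancel₀ _ hG.ne'
  obtain ⟨wseg, hwdef⟩ : ∃ w : EuclideanSpace ℝ (Fin 2), w = (1 - μ)⁻¹ • (v - μ • p) := ⟨_, rfl⟩
  have hw' : (1 - μ) • wseg = v - μ • p := by
    rw [hwdef, smul_smul, mul_inv_cancel₀ h1μ0, one_smul]
  have hwq : (1 - μ) • (wseg - q) = (v - q) - μ • (p - q) := by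
    rw [smul_sub, hw']; module
  have hwlev : ⟪wseg - q, n⟫ = 0 := by
    have h2 : ⟪(1 - μ) • (wseg - q), n⟫ = 0 := by
      rw [hwq, inner_sub_left, real_inner_smul_left]
      linarith [hμG]
    rw [real_inner_smul_left] at h2
    rcases mul_eq_zero.mp h2 with h' | h'
    · exact absurd h' h1μ0
    · exact h'
  obtain ⟨τ, hτ⟩ := ker1 hn (sub_ne_zero.mpr hab) hlev hwlev
  have e0 : (0:ℝ) < ‖b - a‖ := norm_pos_iff.mpr (sub_ne_zero.mpr hab)
  have hmin : 0 < min s (1 - s) := lt_min hs0 (by linarith)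
  have hnorm1 : (1 - μ) * ‖wseg - q‖ = ‖(v - q) - μ • (p - q)‖ := by
    rw [← hwq, norm_smul, Real.norm_eq_abs, abs_of_pos (by linarith : (0:ℝ) < 1 - μ)]
  have step1 : (1 - μ) * ‖wseg - q‖ ≤ ‖v - q‖ + μ * ‖p - q‖ := by
    rw [hnorm1]
    calc ‖(v - q) - μ • (p - q)‖ ≤ ‖v - q‖ + ‖μ • (p - q)‖ := norm_sub_le _ _
      _ = ‖v - q‖ + μ * ‖p - q‖ := by
          rw [norm_smul, Real.norm_eq_abs, abs_of_nonneg hμ0]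
  have step2 : ⟪p - q, n⟫ * ((1 - μ) * ‖wseg - q‖) ≤
      ⟪p - q, n⟫ * ‖v - q‖ + ⟪v - q, n⟫ * ‖p - q‖ := by
    have h5 := mul_le_mul_of_nonneg_left step1 hG.le
    have e : ⟪p - q, n⟫ * (‖v - q‖ + μ * ‖p - q‖) =
        ⟪p - q, n⟫ * ‖v - q‖ + ⟪v - q, n⟫ * ‖p - q‖ := by
      rw [mul_add, show ⟪p - q, n⟫ * (μ * ‖p - q‖) = μ * ⟪p - q, n⟫ * ‖p - q‖ from by ring,
        hμG]
    linarith [h5, e.le, e.ge]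
  have step4 : ⟪v - q, n⟫ * ‖p - q‖ ≤ (‖v - q‖ * ‖n‖) * ‖p - q‖ :=
    mul_le_mul_of_nonneg_right hFb (norm_nonneg _)
  have step5 : ⟪p - q, n⟫ * ((1 - μ) * ‖wseg - q‖) ≤
      (min s (1 - s)) * (‖b - a‖ * ⟪p - q, n⟫) / 4 := by
    nlinarith [step2, step4, hv2]
  have step6 : ⟪p - q, n⟫ * (1/2 * ‖wseg - q‖) ≤ ⟪p - q, n⟫ * ((1 - μ) * ‖wseg - q‖) := by
    apply mul_le_mul_of_nonneg_left _ hG.le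
    exact mul_le_mul_of_nonneg_right h1μ (norm_nonneg _)
  have c2 : ⟪p - q, n⟫ * ‖wseg - q‖ ≤ ⟪p - q, n⟫ * ((min s (1 - s)) * ‖b - a‖ / 2) := by
    linarith [step5, step6]
  have step7 : ‖wseg - q‖ ≤ (min s (1 - s)) * ‖b - a‖ / 2 := (mul_le_mul_iff_right₀ hG).mp c2
  have htau : |τ| * ‖b - a‖ = ‖wseg - q‖ := by
    rw [hτ, norm_smul, Real.norm_eq_abs]
  have c3 : |τ| * ‖b - a‖ ≤ (min s (1 - s) / 2) * ‖b - a‖ := by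
    rw [htau]; linarith [step7]
  have hτb : |τ| ≤ min s (1 - s) / 2 := (mul_le_mul_iff_left₀ e0).mp c3
  have hτlow : -(min s (1 - s) / 2) ≤ τ := by
    have := abs_le.mp hτb
    linarith [this.1]
  have hτhigh : τ ≤ min s (1 - s) / 2 := (abs_le.mp hτb).2
  have hst0 : 0 ≤ s + τ := by
    have h := min_le_left s (1 - s)
    linarith
  have hst1 : s + τ ≤ 1 := by
    have h := min_le_right s (1 - s)
    linarith
  have hwseg_eq : wseg = q + τ • (b - a) := by
    have : wseg - q = τ • (b - a) := hτ
    linear_combination (norm := module) this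
  have hcomb : wseg = (1 - (s + τ)) • a + (s + τ) • b := by
    rw [hwseg_eq, hq]; module
  have hwP : wseg ∈ P := by
    rw [hcomb]
    exact hP ha hb (by linarith) hst0 (by ring)
  have hvcomb : v = (1 - μ) • wseg + μ • p := by
    rw [hw']; abel
  rw [hvcomb]
  exact hP hwP hp (by linarith) hμ0 (by ring)

/-- A point strictly inside a level chord of a convex set, with points of `P` strictly on both
sides of the level line, is an interior point. -/
lemma mem_interior_of_between {P : Set (EuclideanSpace ℝ (Fin 2))} (hP : Convex ℝ P)
    {a b pp pm q n : EuclideanSpace ℝ (Fin 2)}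
    (ha : a ∈ P) (hb : b ∈ P) (hpp : pp ∈ P) (hpm : pm ∈ P)
    (hab : b ≠ a) (hlev : ⟪b - a, n⟫ = 0)
    {s : ℝ} (hs0 : 0 < s) (hs1 : s < 1) (hq : q = a + s • (b - a))
    (hGp : 0 < ⟪pp - q, n⟫) (hGm : ⟪pm - q, n⟫ < 0) :
    q ∈ interior P := by
  have hn : n ≠ 0 := by
    rintro rfl
    rw [inner_zero_right] at hGp
    exact lt_irrefl 0 hGp
  have hmin : 0 < min s (1 - s) := lt_min hs0 (by linarith)
  have hnn : (0:ℝ) < ‖n‖ := norm_pos_iff.mpr hn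
  have e0 : (0:ℝ) < ‖b - a‖ := norm_pos_iff.mpr (sub_ne_zero.mpr hab)
  have key : ∀ (n' p : EuclideanSpace ℝ (Fin 2)), 0 < ‖n'‖ → 0 < ⟪p - q, n'⟫ →
      ∃ ε > 0, ∀ v : EuclideanSpace ℝ (Fin 2), ‖v - q‖ < ε →
        2 * (‖v - q‖ * ‖n'‖) ≤ ⟪p - q, n'⟫ ∧
        4 * ((⟪p - q, n'⟫ + ‖p - q‖ * ‖n'‖) * ‖v - q‖) ≤
          (min s (1 - s)) * (‖b - a‖ * ⟪p - q, n'⟫) := by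
    intro n' p hn' hG
    have hden : (0:ℝ) < 4 * (⟪p - q, n'⟫ + ‖p - q‖ * ‖n'‖) := by
      have := mul_nonneg (norm_nonneg (p - q)) hn'.le
      linarith
    refine ⟨min (⟪p - q, n'⟫ / (2 * ‖n'‖))
      ((min s (1 - s)) * (‖b - a‖ * ⟪p - q, n'⟫) / (4 * (⟪p - q, n'⟫ + ‖p - q‖ * ‖n'‖))),
      lt_min (div_pos hG (by linarith)) (div_pos (by positivity) hden), ?_⟩
    intro v hv
    obtain ⟨hv1, hv2⟩ := lt_min_iff.mp hv
    constructor
    · rw [lt_div_iff₀ (by linarith : (0:ℝ) < 2 * ‖n'‖)] at hv1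
      nlinarith [hv1]
    · rw [lt_div_iff₀ hden] at hv2
      nlinarith [hv2]
  obtain ⟨εp, hεp, hkeyp⟩ := key n pp hnn hGp
  have hGm' : 0 < ⟪pm - q, -n⟫ := by rw [inner_neg_right]; linarith
  have hnn' : (0:ℝ) < ‖(-n : EuclideanSpace ℝ (Fin 2))‖ := by rwa [norm_neg]
  obtain ⟨εm, hεm, hkeym⟩ := key (-n) pm hnn' hGm'
  rw [mem_interior_iff_mem_nhds, Metric.mem_nhds_iff]
  refine ⟨min εp εm, lt_min hεp hεm, ?_⟩
  intro v hv
  rw [Metric.mem_ball, dist_eq_norm] at hv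
  obtain ⟨hvp, hvm⟩ := lt_min_iff.mp hv
  rcases le_or_gt 0 ⟪v - q, n⟫ with hsgn | hsgn
  · exact mem_of_near hP ha hb hpp hab hlev hn hs0 hs1 hq hGp hsgn
      (hkeyp v hvp).1 (hkeyp v hvp).2
  · have hlev' : ⟪b - a, -n⟫ = 0 := by rw [inner_neg_right, hlev, neg_zero]
    have hn' : (-n : EuclideanSpace ℝ (Fin 2)) ≠ 0 := neg_ne_zero.mpr hn
    have hsgn' : 0 ≤ ⟪v - q, -n⟫ := by rw [inner_neg_right]; linarith
    exact mem_of_near hP ha hb hpm hab hlev' hn' hs0 hs1 hq hGm' hsgn'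
      (hkeym v hvm).1 (hkeym v hvm).2

/-- No three distinct frontier points on an intermediate level line. -/
lemma no_three_level {P : Set (EuclideanSpace ℝ (Fin 2))} (hP : Convex ℝ P) (hPc : IsClosed P)
    {pp pm : EuclideanSpace ℝ (Fin 2)} (hpp : pp ∈ P) (hpm : pm ∈ P)
    {n : EuclideanSpace ℝ (Fin 2)} {δ : ℝ}
    {e1 e2 e3 : EuclideanSpace ℝ (Fin 2)}
    (h1 : e1 ∈ frontier P) (h2 : e2 ∈ frontier P) (h3 : e3 ∈ frontier P)
    (h12 : e1 ≠ e2) (h13 : e1 ≠ e3) (h23 : e2 ≠ e3)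
    (l1 : ⟪e1, n⟫ = δ) (l2 : ⟪e2, n⟫ = δ) (l3 : ⟪e3, n⟫ = δ)
    (hm : ⟪pm, n⟫ < δ) (hpl : δ < ⟪pp, n⟫) : False := by
  have hn : n ≠ 0 := by
    rintro rfl
    rw [inner_zero_right] at hm hpl
    linarith
  have he1P : e1 ∈ P := hPc.frontier_subset h1
  have he2P : e2 ∈ P := hPc.frontier_subset h2
  have he3P : e3 ∈ P := hPc.frontier_subset h3
  have hd : e2 - e1 ≠ 0 := sub_ne_zero.mpr h12.symm
  have hdn : ⟪e2 - e1, n⟫ = 0 := by rw [inner_sub_left, l1, l2]; ring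
  have h31n : ⟪e3 - e1, n⟫ = 0 := by rw [inner_sub_left, l1, l3]; ring
  obtain ⟨t, ht⟩ := ker1 hn hd hdn h31n
  have ht0 : t ≠ 0 := by
    rintro rfl
    rw [zero_smul, sub_eq_zero] at ht
    exact h13 ht.symm
  have ht1 : t ≠ 1 := by
    rintro rfl
    rw [one_smul] at ht
    have : e3 = e2 := by
      have := sub_eq_sub_iff_add_eq_add.mp ht
      linear_combination (norm := module) this
    exact h23 this.symm
  rcases lt_trichotomy t 0 with htneg | htz | htpos
  · -- e1 is between e3 and e2 : e1 = e3 + (-t/(1-t)) • (e2 - e3)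
    have h1t : (0:ℝ) < 1 - t := by linarith
    have hq : e1 = e3 + (-t / (1 - t)) • (e2 - e3) := by
      have he23 : e2 - e3 = (1 - t) • (e2 - e1) := by
        rw [sub_smul, one_smul, ← ht]; abel
      rw [he23, smul_smul, div_mul_cancel₀ _ h1t.ne']
      have : e3 = e1 + t • (e2 - e1) := by
        rw [← ht]; abel
      rw [this]; module
    have hGp : 0 < ⟪pp - e1, n⟫ := by rw [inner_sub_left, l1]; linarith
    have hGm : ⟪pm - e1, n⟫ < 0 := by rw [inner_sub_left, l1]; linarith
    have hlev' : ⟪e2 - e3, n⟫ = 0 := by rw [inner_sub_left, l2, l3]; ring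
    have hint := mem_interior_of_between hP he3P he2P hpp hpm h23
      hlev' (div_pos (by linarith) h1t)
      (by rw [div_lt_one h1t]; linarith) hq hGp hGm
    exact h1.2 hint
  · exact ht0 htz
  · rcases lt_trichotomy t 1 with htl | hte | htg
    · -- e3 between e1 and e2
      have hq : e3 = e1 + t • (e2 - e1) := by rw [← ht]; abel
      have hGp : 0 < ⟪pp - e3, n⟫ := by rw [inner_sub_left, l3]; linarith
      have hGm : ⟪pm - e3, n⟫ < 0 := by rw [inner_sub_left, l3]; linarith
      have hint := mem_interior_of_between hP he1P he2P hpp hpm h12.symm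
        hdn htpos htl hq hGp hGm
      exact h3.2 hint
    · exact ht1 hte
    · -- e2 between e1 and e3
      have hq : e2 = e1 + (1 / t) • (e3 - e1) := by
        rw [ht, smul_smul, one_div, inv_mul_cancel₀ ht0, one_smul]
        abel
      have hd3 : e3 ≠ e1 := fun h => h13 h.symm
      have h31n' : ⟪e3 - e1, n⟫ = 0 := h31n
      have hGp : 0 < ⟪pp - e2, n⟫ := by rw [inner_sub_left, l2]; linarith
      have hGm : ⟪pm - e2, n⟫ < 0 := by rw [inner_sub_left, l2]; linarith
      have hint := mem_interior_of_between hP he1P he3P hpp hpm hd3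
        h31n' (by positivity : 0 < 1 / t) (by rw [div_lt_one (by linarith)]; linarith)
        hq hGp hGm
      exact h2.2 hint

/-- Interleaved chords of an injective continuous curve in the frontier of a closed convex
set must intersect. -/
lemma chords_cross {P : Set (EuclideanSpace ℝ (Fin 2))} (hP : Convex ℝ P) (hPc : IsClosed P)
    {γ : ℝ → EuclideanSpace ℝ (Fin 2)}
    (hcont : ContinuousOn γ (Icc 0 1)) (hinj : InjOn γ (Icc 0 1))
    (hbd : ∀ t ∈ Icc (0:ℝ) 1, γ t ∈ frontier P)
    {a0 a1 a2 a3 : ℝ} (ha0 : 0 ≤ a0) (h01 : a0 < a1) (h12 : a1 < a2) (h23 : a2 < a3)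
    (ha3 : a3 ≤ 1) :
    (segment ℝ (γ a0) (γ a2) ∩ segment ℝ (γ a1) (γ a3)).Nonempty := by
  by_contra hcon
  rw [Set.not_nonempty_iff_eq_empty] at hcon
  have hdisj : Disjoint (segment ℝ (γ a0) (γ a2)) (segment ℝ (γ a1) (γ a3)) :=
    Set.disjoint_iff_inter_eq_empty.mpr hcon
  have hcpt : ∀ x y : EuclideanSpace ℝ (Fin 2), IsCompact (segment ℝ x y) := by
    intro x y
    rw [← convexHull_pair]
    exact ((Set.finite_singleton y).insert x).isCompact_convexHull (𝕜 := ℝ)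
  obtain ⟨f, u, v, hfu, huv, hfv⟩ := geometric_hahn_banach_compact_closed
    (convex_segment _ _) (hcpt _ _) (convex_segment _ _) (hcpt _ _).isClosed hdisj
  set n := ((InnerProductSpace.toDual ℝ (EuclideanSpace ℝ (Fin 2))).symm f :
    EuclideanSpace ℝ (Fin 2)) with hn
  have hfn : ∀ x, ⟪x, n⟫ = f x := by
    intro x
    rw [real_inner_comm, hn]
    exact InnerProductSpace.toDual_symm_apply
  set δ := (u + v) / 2 with hδ
  have hv0 : f (γ a0) < δ := by
    have := hfu _ (left_mem_segment ℝ (γ a0) (γ a2)); rw [hδ]; linarith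
  have hv2 : f (γ a2) < δ := by
    have := hfu _ (right_mem_segment ℝ (γ a0) (γ a2)); rw [hδ]; linarith
  have hv1 : δ < f (γ a1) := by
    have := hfv _ (left_mem_segment ℝ (γ a1) (γ a3)); rw [hδ]; linarith
  have hv3 : δ < f (γ a3) := by
    have := hfv _ (right_mem_segment ℝ (γ a1) (γ a3)); rw [hδ]; linarith
  have hIcc : ∀ t t' : ℝ, 0 ≤ t → t' ≤ 1 → t ≤ t' → Icc t t' ⊆ Icc (0:ℝ) 1 := by
    intro t t' h h' h''
    exact Icc_subset_Icc h h'
  have hfcont : ContinuousOn (fun t => f (γ t)) (Icc 0 1) :=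
    f.continuous.comp_continuousOn hcont
  -- three crossings of level δ
  have hmem01 : Icc a0 a1 ⊆ Icc (0:ℝ) 1 := hIcc _ _ ha0 (by linarith) h01.le
  have hmem12 : Icc a1 a2 ⊆ Icc (0:ℝ) 1 := hIcc _ _ (by linarith) (by linarith) h12.le
  have hmem23 : Icc a2 a3 ⊆ Icc (0:ℝ) 1 := hIcc _ _ (by linarith) ha3 h23.le
  obtain ⟨c1, hc1mem, hc1⟩ := intermediate_value_Icc h01.le (hfcont.mono hmem01)
    (⟨hv0.le, hv1.le⟩ : δ ∈ Icc (f (γ a0)) (f (γ a1)))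
  obtain ⟨c2, hc2mem, hc2⟩ := intermediate_value_Icc' h12.le (hfcont.mono hmem12)
    (⟨hv2.le, hv1.le⟩ : δ ∈ Icc (f (γ a2)) (f (γ a1)))
  obtain ⟨c3, hc3mem, hc3⟩ := intermediate_value_Icc h23.le (hfcont.mono hmem23)
    (⟨hv2.le, hv3.le⟩ : δ ∈ Icc (f (γ a2)) (f (γ a3)))
  -- strict orderings
  have hc1a1 : c1 < a1 := lt_of_le_of_ne hc1mem.2 (fun h => by rw [h] at hc1; linarith)
  have hc2a1 : a1 < c2 := lt_of_le_of_ne hc2mem.1 (fun h => by rw [← h] at hc2; linarith)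
  have hc2a2 : c2 < a2 := lt_of_le_of_ne hc2mem.2 (fun h => by rw [h] at hc2; linarith)
  have hc3a2 : a2 < c3 := lt_of_le_of_ne hc3mem.1 (fun h => by rw [← h] at hc3; linarith)
  have hc1I : c1 ∈ Icc (0:ℝ) 1 := hmem01 hc1mem
  have hc2I : c2 ∈ Icc (0:ℝ) 1 := hmem12 hc2mem
  have hc3I : c3 ∈ Icc (0:ℝ) 1 := hmem23 hc3mem
  have hne12 : γ c1 ≠ γ c2 := fun h => by
    have := hinj hc1I hc2I h; linarith
  have hne13 : γ c1 ≠ γ c3 := fun h => by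
    have := hinj hc1I hc3I h; linarith
  have hne23 : γ c2 ≠ γ c3 := fun h => by
    have := hinj hc2I hc3I h; linarith
  have ha1I : a1 ∈ Icc (0:ℝ) 1 := ⟨by linarith, by linarith⟩
  have ha0I : a0 ∈ Icc (0:ℝ) 1 := ⟨ha0, by linarith⟩
  exact no_three_level hP hPc (hPc.frontier_subset (hbd a1 ha1I))
    (hPc.frontier_subset (hbd a0 ha0I))
    (hbd c1 hc1I) (hbd c2 hc2I) (hbd c3 hc3I) hne12 hne13 hne23
    ((hfn _).trans hc1) ((hfn _).trans hc2) ((hfn _).trans hc3)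
    (by rw [hfn]; exact hv0) (by rw [hfn]; exact hv1)

set_option maxHeartbeats 1000000 in
/-- Let `P` be a convex polygon contained in the closed disk of center `c`
and radius `r`, with vertices `vi, vj ∈ P` antipodal on the bounding circle
(`c = midpoint vi vj`, `dist c vi = r`). Let `γ` be an injective continuous
parameterization (from `vj` to `vi`) of the boundary chain of `P` lying in the closed
half-plane bounded by the line `vi vj` with inward normal `u`. Then the chain is
self-approaching from `vj` to `vi`. -/
theorem stmt11 (V : Finset (EuclideanSpace ℝ (Fin 2)))
    (P : Set (EuclideanSpace ℝ (Fin 2))) (hP : P = convexHull ℝ (V : Set (EuclideanSpace ℝ (Fin 2))))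
    (c vi vj : EuclideanSpace ℝ (Fin 2)) (r : ℝ) (hr : 0 < r)
    (hvi : vi ∈ V) (hvj : vj ∈ V)
    (hmid : c = midpoint ℝ vi vj) (hri : dist c vi = r)
    (hball : P ⊆ Metric.closedBall c r)
    (u : EuclideanSpace ℝ (Fin 2)) (hu : u ≠ 0) (huperp : ⟪u, vj - vi⟫ = 0)
    (γ : ℝ → EuclideanSpace ℝ (Fin 2))
    (hcont : ContinuousOn γ (Set.Icc (0:ℝ) 1))
    (hinj : Set.InjOn γ (Set.Icc (0:ℝ) 1))
    (h0 : γ 0 = vj) (h1 : γ 1 = vi)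
    (hbd : ∀ t ∈ Set.Icc (0:ℝ) 1, γ t ∈ frontier P)
    (hside : ∀ t ∈ Set.Icc (0:ℝ) 1, 0 ≤ ⟪γ t - c, u⟫) :
    ∀ t₁ ∈ Set.Icc (0:ℝ) 1, ∀ t₂ ∈ Set.Icc (0:ℝ) 1, ∀ t₃ ∈ Set.Icc (0:ℝ) 1,
      t₁ ≤ t₂ → t₂ ≤ t₃ → dist (γ t₂) (γ t₃) ≤ dist (γ t₁) (γ t₃) := by
  intro t1 ht1 t2 ht2 t3 ht3 h12 h23
  rcases eq_or_lt_of_le h12 with rfl | h12'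
  · exact le_refl _
  rcases eq_or_lt_of_le h23 with rfl | h23'
  · simp only [dist_self]
    exact dist_nonneg
  have hPconv : Convex ℝ P := by rw [hP]; exact convex_convexHull ℝ _
  have hPcl : IsClosed P := by rw [hP]; exact (V.finite_toSet.isCompact_convexHull (𝕜 := ℝ)).isClosed
  have K1 : (segment ℝ (γ 0) (γ t2) ∩ segment ℝ (γ t1) (γ t3)).Nonempty := by
    rcases eq_or_lt_of_le ht1.1 with hz0 | hz0
    · refine ⟨γ t1, ?_, left_mem_segment ℝ _ _⟩
      rw [← hz0]
      exact left_mem_segment ℝ _ _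
    · exact chords_cross hPconv hPcl hcont hinj hbd (le_refl 0) hz0 h12' h23' ht3.2
  have K2 : (segment ℝ (γ t1) (γ t3) ∩ segment ℝ (γ t2) (γ 1)).Nonempty := by
    rcases eq_or_lt_of_le ht3.2 with hz1 | hz1
    · refine ⟨γ t3, right_mem_segment ℝ _ _, ?_⟩
      rw [hz1]
      exact right_mem_segment ℝ _ _
    · exact chords_cross hPconv hPcl hcont hinj hbd ht1.1 h12' h23' hz1 (le_refl 1)
  obtain ⟨p, hpBy, hpxz⟩ := K1
  obtain ⟨qq, hqxz, hqyA⟩ := K2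
  obtain ⟨α1, β1, hα1, hβ1, hs1, hp1⟩ := hpBy
  obtain ⟨α2, β2, hα2, hβ2, hs2, hp2⟩ := hpxz
  obtain ⟨α3, β3, hα3, hβ3, hs3, hq3⟩ := hqxz
  obtain ⟨α4, β4, hα4, hβ4, hs4, hq4⟩ := hqyA
  -- the Thales inequality for the diameter
  have hvv : c - vi = vj - c := by
    rw [sub_eq_sub_iff_add_eq_add, hmid, midpoint_add_self]
    exact add_comm vi vj
  have hyball : ‖γ t2 - c‖ ≤ r := by
    have := hball (hPcl.frontier_subset (hbd t2 ht2))
    rwa [mem_closedBall, dist_eq_norm] at this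
  have hrad : ‖vj - c‖ = r := by
    rw [← hvv, ← dist_eq_norm]
    exact hri
  have hthales : ⟪γ 0 - γ t2, γ 1 - γ t2⟫ ≤ 0 := by
    obtain ⟨w, hw⟩ : ∃ w, w = vj - c := ⟨_, rfl⟩
    obtain ⟨mm, hmm⟩ : ∃ m, m = γ t2 - c := ⟨_, rfl⟩
    have e1 : vj - γ t2 = w - mm := by rw [hw, hmm]; abel
    have e2 : vi - γ t2 = -w - mm := by
      rw [hw, hmm, show vi = c - (vj - c) from by rw [← hvv]; abel]
      abel
    rw [h0, h1, e1, e2]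
    have hexp : ⟪w - mm, -w - mm⟫ = ⟪mm, mm⟫ - ⟪w, w⟫ := by
      simp only [inner_sub_left, inner_sub_right, inner_neg_left, inner_neg_right]
      rw [real_inner_comm mm w]
      ring
    rw [hexp]
    have hA : ⟪mm, mm⟫ ≤ r ^ 2 := by
      rw [hmm, real_inner_self_eq_norm_sq]
      nlinarith [hyball, norm_nonneg (γ t2 - c)]
    have hB : ⟪w, w⟫ = r ^ 2 := by rw [hw, real_inner_self_eq_norm_sq, hrad]
    linarith
  -- obtuse angle at the crossing points
  have hyp' : γ t2 - p = α1 • (γ t2 - γ 0) := by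
    have hβ1' : β1 = 1 - α1 := by linarith
    rw [← hp1, hβ1']
    module
  have hyq' : γ t2 - qq = β4 • (γ t2 - γ 1) := by
    have hα4' : α4 = 1 - β4 := by linarith
    rw [← hq4, hα4']
    module
  have hpq : ⟪γ t2 - p, γ t2 - qq⟫ ≤ 0 := by
    rw [hyp', hyq', real_inner_smul_left, real_inner_smul_right]
    have hin : ⟪γ t2 - γ 0, γ t2 - γ 1⟫ ≤ 0 := by
      have hrw : ⟪γ t2 - γ 0, γ t2 - γ 1⟫ = ⟪γ 0 - γ t2, γ 1 - γ t2⟫ := by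
        rw [show γ t2 - γ 0 = -(γ 0 - γ t2) from by abel,
          show γ t2 - γ 1 = -(γ 1 - γ t2) from by abel, inner_neg_neg]
      rw [hrw]
      exact hthales
    have h' := mul_le_mul_of_nonneg_left hin (mul_nonneg hα1 hβ4)
    rw [mul_zero] at h'
    linarith [h']
  have hpform : p = γ t1 + β2 • (γ t3 - γ t1) := by
    have hα2' : α2 = 1 - β2 := by linarith
    rw [← hp2, hα2']
    module
  have hqform : qq = γ t1 + β3 • (γ t3 - γ t1) := by
    have hα3' : α3 = 1 - β3 := by linarith
    rw [← hq3, hα3']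
    module
  have hobtuse := subseg hβ2 (by linarith : β2 ≤ 1) hβ3 (by linarith : β3 ≤ 1)
    hpform hqform (v := γ t2) hpq
  rw [dist_eq_norm, dist_eq_norm]
  have hexp2 : ‖γ t1 - γ t3‖ ^ 2 =
      ‖γ t1 - γ t2‖ ^ 2 + 2 * ⟪γ t1 - γ t2, γ t2 - γ t3⟫ + ‖γ t2 - γ t3‖ ^ 2 := by
    rw [show γ t1 - γ t3 = (γ t1 - γ t2) + (γ t2 - γ t3) from by abel]
    exact norm_add_sq_real _ _
  have hsign : 0 ≤ ⟪γ t1 - γ t2, γ t2 - γ t3⟫ := by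
    rw [show γ t1 - γ t2 = -(γ t2 - γ t1) from by abel, inner_neg_left]
    linarith [hobtuse]
  nlinarith [hexp2, hsign, norm_nonneg (γ t1 - γ t3), norm_nonneg (γ t2 - γ t3),
    sq_nonneg ‖γ t1 - γ t2‖]
end

section
/- Let γ : [0,1] → ℝ² be a continuous piecewise-linear path such that for every t ∈ [0,1), the remainder of the path γ([t,1]) is contained in a closed cone with apex γ(t) and opening angle at most π/2 whose axis direction at each point contains the forward direction of the path. Then γ is self-approaching from γ(0) to γ(1). -/
open scoped RealInnerProductSpace

lemma lemA {E : Type*} [NormedAddCommGroup E] [InnerProductSpace ℝ E]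
    (u v w : E) (hu : ‖u‖ = 1)
    (hv : InnerProductGeometry.angle v u ≤ Real.pi / 4)
    (hw : InnerProductGeometry.angle w u ≤ Real.pi / 4) :
    0 ≤ ⟪v, w⟫ := by
  by_cases hv0 : v = 0
  · simp [hv0]
  by_cases hw0 : w = 0
  · simp [hw0]
  have hπ : Real.pi / 4 ≤ Real.pi := by linarith [Real.pi_pos]
  have hcosv : Real.cos (Real.pi/4) ≤ Real.cos (InnerProductGeometry.angle v u) :=
    Real.cos_le_cos_of_nonneg_of_le_pi (InnerProductGeometry.angle_nonneg v u) hπ hv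
  have hcosw : Real.cos (Real.pi/4) ≤ Real.cos (InnerProductGeometry.angle w u) :=
    Real.cos_le_cos_of_nonneg_of_le_pi (InnerProductGeometry.angle_nonneg w u) hπ hw
  rw [Real.cos_pi_div_four] at hcosv hcosw
  have hav : Real.sqrt 2 / 2 * ‖v‖ ≤ ⟪v, u⟫ := by
    have h1 := InnerProductGeometry.cos_angle_mul_norm_mul_norm v u
    rw [hu, mul_one] at h1
    calc Real.sqrt 2 / 2 * ‖v‖ ≤ Real.cos (InnerProductGeometry.angle v u) * ‖v‖ :=
          mul_le_mul_of_nonneg_right hcosv (norm_nonneg v)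
      _ = ⟪v, u⟫ := h1
  have haw : Real.sqrt 2 / 2 * ‖w‖ ≤ ⟪w, u⟫ := by
    have h1 := InnerProductGeometry.cos_angle_mul_norm_mul_norm w u
    rw [hu, mul_one] at h1
    calc Real.sqrt 2 / 2 * ‖w‖ ≤ Real.cos (InnerProductGeometry.angle w u) * ‖w‖ :=
          mul_le_mul_of_nonneg_right hcosw (norm_nonneg w)
      _ = ⟪w, u⟫ := h1
  have hs2 : Real.sqrt 2 ^ 2 = 2 := Real.sq_sqrt (by norm_num)
  have hs2n : 0 ≤ Real.sqrt 2 := Real.sqrt_nonneg 2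
  have ha0 : 0 ≤ ⟪v, u⟫ := le_trans (by positivity) hav
  have hb0 : 0 ≤ ⟪w, u⟫ := le_trans (by positivity) haw
  have ha2 : ‖v‖^2 / 2 ≤ ⟪v, u⟫^2 := by
    nlinarith [mul_le_mul hav hav (by positivity) ha0, norm_nonneg v]
  have hb2 : ‖w‖^2 / 2 ≤ ⟪w, u⟫^2 := by
    nlinarith [mul_le_mul haw haw (by positivity) hb0, norm_nonneg w]
  have hva : ‖v - ⟪v, u⟫ • u‖^2 = ‖v‖^2 - ⟪v, u⟫^2 := by
    rw [norm_sub_sq_real, real_inner_smul_right, norm_smul, hu, mul_one,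
      Real.norm_eq_abs, sq_abs]
    ring
  have hwb : ‖w - ⟪w, u⟫ • u‖^2 = ‖w‖^2 - ⟪w, u⟫^2 := by
    rw [norm_sub_sq_real, real_inner_smul_right, norm_smul, hu, mul_one,
      Real.norm_eq_abs, sq_abs]
    ring
  have huu : ⟪u, u⟫ = 1 := by
    rw [real_inner_self_eq_norm_mul_norm, hu]; norm_num
  have hinner : ⟪v - ⟪v, u⟫ • u, w - ⟪w, u⟫ • u⟫ = ⟪v, w⟫ - ⟪v, u⟫ * ⟪w, u⟫ := by
    simp only [inner_sub_left, inner_sub_right, real_inner_smul_left, real_inner_smul_right,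
      huu, real_inner_comm u w]
    ring
  have hc : ‖v - ⟪v, u⟫ • u‖ ≤ ⟪v, u⟫ := by
    nlinarith [norm_nonneg (v - ⟪v, u⟫ • u), sq_nonneg (‖v - ⟪v, u⟫ • u‖ - ⟪v, u⟫),
      sq_nonneg (‖v - ⟪v, u⟫ • u‖ + ⟪v, u⟫)]
  have hd : ‖w - ⟪w, u⟫ • u‖ ≤ ⟪w, u⟫ := by
    nlinarith [norm_nonneg (w - ⟪w, u⟫ • u), sq_nonneg (‖w - ⟪w, u⟫ • u‖ - ⟪w, u⟫),
      sq_nonneg (‖w - ⟪w, u⟫ • u‖ + ⟪w, u⟫)]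
  have hcd : ‖v - ⟪v, u⟫ • u‖ * ‖w - ⟪w, u⟫ • u‖ ≤ ⟪v, u⟫ * ⟪w, u⟫ :=
    mul_le_mul hc hd (norm_nonneg _) ha0
  have habs := abs_real_inner_le_norm (v - ⟪v, u⟫ • u) (w - ⟪w, u⟫ • u)
  have hneg := neg_abs_le (⟪v - ⟪v, u⟫ • u, w - ⟪w, u⟫ • u⟫)
  rw [hinner] at habs hneg
  linarith

lemma lemB {E : Type*} [NormedAddCommGroup E] [InnerProductSpace ℝ E]
    (p q v : E) (r₁ r₂ : ℝ) (h12 : r₁ ≤ r₂)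
    (h : ∀ r, r₁ ≤ r → r < r₂ → p + r • v ≠ q → 0 ≤ ⟪v, q - (p + r • v)⟫) :
    ‖p + r₂ • v - q‖ ≤ ‖p + r₁ • v - q‖ := by
  rcases eq_or_lt_of_le h12 with rfl | hlt
  · exact le_refl _
  have expand : ∀ r : ℝ, ⟪v, q - (p + r • v)⟫ = ⟪v, q - p⟫ - r * ‖v‖^2 := by
    intro r
    have : q - (p + r • v) = (q - p) - r • v := by abel
    rw [this, inner_sub_right, real_inner_smul_right, real_inner_self_eq_norm_sq]
  have key : ∀ r, r₁ ≤ r → r < r₂ → 0 ≤ ⟪v, q - (p + r • v)⟫ := by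
    intro r hr1 hr2
    by_cases hne : p + r • v = q
    · by_cases hv : v = 0
      · simp [hv]
      · set r' := (r + r₂) / 2 with hr'
        have hr'1 : r₁ ≤ r' := by simp only [hr']; linarith
        have hr'2 : r' < r₂ := by simp only [hr']; linarith
        have hrr' : r < r' := by simp only [hr']; linarith
        have hne' : p + r' • v ≠ q := by
          intro hEq
          apply hv
          have h0 : (r' - r) • v = 0 := by
            have : p + r' • v = p + r • v := by rw [hEq, hne]
            have h1 : r' • v = r • v := by
              have := add_left_cancel this; exact this
            rw [sub_smul, h1, sub_self]
          rcases smul_eq_zero.mp h0 with h | h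
          · exact absurd (sub_eq_zero.mp h) (by intro hh; linarith [hh ▸ hrr'])
          · exact h
        have h' := h r' hr'1 hr'2 hne'
        rw [expand] at h' ⊢
        nlinarith [sq_nonneg ‖v‖]
    · exact h r hr1 hr2 hne
  have hm := key ((r₁ + r₂)/2) (by linarith) (by linarith)
  rw [expand] at hm
  have hn : ∀ r : ℝ, ‖p + r • v - q‖^2 = ‖p - q‖^2 - 2 * r * ⟪v, q - p⟫ + r^2 * ‖v‖^2 := by
    intro r
    have h1 : p + r • v - q = (p - q) + r • v := by abel
    rw [h1, norm_add_sq_real, real_inner_smul_right, norm_smul, Real.norm_eq_abs,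
      mul_pow, sq_abs]
    have h2 : ⟪p - q, v⟫ = - ⟪v, q - p⟫ := by
      rw [real_inner_comm, ← inner_neg_right, neg_sub]
    rw [h2]; ring
  have hsq : ‖p + r₂ • v - q‖^2 ≤ ‖p + r₁ • v - q‖^2 := by
    rw [hn r₁, hn r₂]
    nlinarith [sq_nonneg ‖v‖]
  nlinarith [norm_nonneg (p + r₂ • v - q), norm_nonneg (p + r₁ • v - q)]

set_option maxHeartbeats 1000000

/-- Icking–Klein–Langetepe, Lemma 3: Let `γ : [0,1] → ℝ²` be a continuous
piecewise-linear path such that for every `t ∈ [0,1)` there is a closed cone with apex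
`γ t` and angular width at most `π/2` (i.e. all directions within angle `π/4` of some unit
axis `u`) containing the remainder `γ([t,1])` of the path. Then `γ` is self-approaching
from `γ 0` to `γ 1`. -/
theorem stmt12 (γ : ℝ → EuclideanSpace ℝ (Fin 2))
    (hcont : ContinuousOn γ (Set.Icc (0:ℝ) 1))
    (hpl : ∃ (m : ℕ) (τ : Fin (m + 1) → ℝ), StrictMono τ ∧ τ 0 = 0 ∧ τ (Fin.last m) = 1 ∧
      ∀ i : Fin m, ∀ s ∈ Set.Icc (τ i.castSucc) (τ i.succ),
        γ s = AffineMap.lineMap (γ (τ i.castSucc)) (γ (τ i.succ))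
          ((s - τ i.castSucc) / (τ i.succ - τ i.castSucc)))
    (hcone : ∀ t ∈ Set.Ico (0:ℝ) 1, ∃ u : EuclideanSpace ℝ (Fin 2), ‖u‖ = 1 ∧
      ∀ s ∈ Set.Icc t 1, γ s ≠ γ t →
        InnerProductGeometry.angle (γ s - γ t) u ≤ Real.pi / 4) :
    ∀ t₁ ∈ Set.Icc (0:ℝ) 1, ∀ t₂ ∈ Set.Icc (0:ℝ) 1, ∀ t₃ ∈ Set.Icc (0:ℝ) 1,
      t₁ ≤ t₂ → t₂ ≤ t₃ → dist (γ t₂) (γ t₃) ≤ dist (γ t₁) (γ t₃) := by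
  obtain ⟨m, τ, hmono, hτ0, hτ1, hseg⟩ := hpl
  intro t₁ ht₁ t₂ ht₂ t₃ ht₃ h12 h23
  set q := γ t₃ with hq
  have ht₃1 : t₃ ≤ 1 := ht₃.2
  -- Claim C : distance to q is non-increasing along a single segment below t₃
  have claimC : ∀ i : Fin m, ∀ a b : ℝ, τ i.castSucc ≤ a → a ≤ b → b ≤ τ i.succ →
      0 ≤ a → b ≤ t₃ → dist (γ b) q ≤ dist (γ a) q := by
    intro i a b hαa hab hbβ ha0 hbt
    set α := τ i.castSucc with hα
    set β := τ i.succ with hβ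
    have hαβ : α < β := hmono (Fin.castSucc_lt_succ : i.castSucc < i.succ)
    have hβ1 : β ≤ 1 := by rw [← hτ1]; exact hmono.monotone (Fin.le_last _)
    have hβα : (0:ℝ) < β - α := by linarith
    set A := γ α with hA
    set B := γ β with hB
    set v := B - A with hv
    have hγlin : ∀ s, α ≤ s → s ≤ β → γ s = A + ((s - α)/(β - α)) • v := by
      intro s h1 h2
      rw [hseg i s ⟨h1, h2⟩, AffineMap.lineMap_apply]
      simp only [vsub_eq_sub, vadd_eq_add]
      rw [add_comm]
    set r₁ := (a - α)/(β - α) with hr₁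
    set r₂ := (b - α)/(β - α) with hr₂
    have hr₁0 : 0 ≤ r₁ := div_nonneg (by linarith) hβα.le
    have hr12 : r₁ ≤ r₂ := (div_le_div_iff_of_pos_right hβα).mpr (by linarith)
    have hr₂1 : r₂ ≤ 1 := by rw [hr₂, div_le_one hβα]; linarith
    have hga : γ a = A + r₁ • v := hγlin a hαa (le_trans hab hbβ)
    have hgb : γ b = A + r₂ • v := hγlin b (le_trans hαa hab) hbβ
    rw [dist_eq_norm, dist_eq_norm, hga, hgb]
    apply lemB A q v r₁ r₂ hr12
    intro r hr1 hr2 hne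
    by_cases hv0 : v = 0
    · simp [hv0]
    set s := α + r * (β - α) with hs
    have hr0 : 0 ≤ r := le_trans hr₁0 hr1
    have hrlt1 : r < 1 := lt_of_lt_of_le hr2 hr₂1
    have hsa : a ≤ s := by
      have h1 : r₁ * (β - α) ≤ r * (β - α) := by nlinarith
      have h2 : r₁ * (β - α) = a - α := by rw [hr₁]; field_simp
      rw [hs]; linarith
    have hsb : s < b := by
      have h1 : r * (β - α) < r₂ * (β - α) := by nlinarith
      have h2 : r₂ * (β - α) = b - α := by rw [hr₂]; field_simp
      rw [hs]; linarith
    have hsα : α ≤ s := by rw [hs]; nlinarith [mul_nonneg hr0 hβα.le]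
    have hsβ : s ≤ β := by linarith
    have hsr : (s - α)/(β - α) = r := by rw [hs]; field_simp; ring
    have hγs : γ s = A + r • v := by rw [hγlin s hsα hsβ, hsr]
    obtain ⟨u, hu1, hucone⟩ := hcone s ⟨by linarith, by linarith⟩
    have hBs : γ β ≠ γ s := by
      rw [hγs]
      intro hEq
      apply hv0
      have h1 : A + (1:ℝ) • v = A + r • v := by
        rw [one_smul]
        rw [show A + v = B by rw [hv]; abel]
        exact hEq
      have h2 : (1 - r) • v = 0 := by
        have := add_left_cancel h1
        rw [sub_smul, this, sub_self]
      rcases smul_eq_zero.mp h2 with h | h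
      · exact absurd (sub_eq_zero.mp h).symm (ne_of_lt hrlt1)
      · exact h
    have hqs : γ t₃ ≠ γ s := by
      rw [hγs]; intro hEq; exact hne (by rw [hq]; exact hEq.symm)
    have hang1 : InnerProductGeometry.angle (γ β - γ s) u ≤ Real.pi / 4 :=
      hucone β ⟨by linarith, hβ1⟩ hBs
    have hang2 : InnerProductGeometry.angle (γ t₃ - γ s) u ≤ Real.pi / 4 :=
      hucone t₃ ⟨by linarith, ht₃1⟩ hqs
    have hinner := lemA u (γ t₃ - γ s) (γ β - γ s) hu1 hang2 hang1
    have hBsv : γ β - γ s = (1 - r) • v := by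
      rw [hγs, hv, sub_smul, one_smul]
      abel
    rw [hBsv, real_inner_smul_right] at hinner
    have h1r : (0:ℝ) < 1 - r := by linarith
    have hfin : 0 ≤ ⟪γ t₃ - γ s, v⟫ := nonneg_of_mul_nonneg_right hinner h1r
    rw [real_inner_comm] at hfin
    rw [hγs] at hfin
    exact hfin
  -- glue segments by induction
  have hτnn : ∀ k : Fin (m+1), 0 ≤ τ k := by
    intro k
    rw [← hτ0]
    exact hmono.monotone (Fin.zero_le _)
  have H : ∀ i : ℕ, ∀ hi : i < m + 1, ∀ x y : ℝ, 0 ≤ x → x ≤ y → y ≤ t₃ →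
      y ≤ τ ⟨i, hi⟩ → dist (γ y) q ≤ dist (γ x) q := by
    intro i
    induction i with
    | zero =>
      intro hi x y hx hxy hyt hyτ
      have h0 : τ ⟨0, hi⟩ = 0 := hτ0
      have : x = y := le_antisymm hxy (by rw [h0] at hyτ; linarith)
      rw [this]
    | succ n ih =>
      intro hi x y hx hxy hyt hyτ
      have hn : n < m + 1 := by omega
      have hnm : n < m := by omega
      by_cases hyn : y ≤ τ ⟨n, hn⟩
      · exact ih hn x y hx hxy hyt hyn
      · push_neg at hyn
        have hcs : (⟨n, hnm⟩ : Fin m).castSucc = ⟨n, hn⟩ := rfl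
        have hsc : (⟨n, hnm⟩ : Fin m).succ = ⟨n + 1, hi⟩ := rfl
        by_cases hxn : τ ⟨n, hn⟩ ≤ x
        · exact claimC ⟨n, hnm⟩ x y (hcs ▸ hxn) hxy (hsc ▸ hyτ) hx hyt
        · push_neg at hxn
          have h1 : dist (γ y) q ≤ dist (γ (τ ⟨n, hn⟩)) q :=
            claimC ⟨n, hnm⟩ (τ ⟨n, hn⟩) y (le_of_eq (by rw [hcs])) hyn.le
              (hsc ▸ hyτ) (hτnn _) hyt
          have h2 : dist (γ (τ ⟨n, hn⟩)) q ≤ dist (γ x) q :=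
            ih hn x (τ ⟨n, hn⟩) hx hxn.le (by linarith) le_rfl
          linarith
  have hlast : (⟨m, Nat.lt_succ_self m⟩ : Fin (m+1)) = Fin.last m := rfl
  have := H m (Nat.lt_succ_self m) t₁ t₂ ht₁.1 h12 h23 (by rw [hlast, hτ1]; exact le_trans h23 ht₃1)
  exact this
end

section
/- For any convex polygon P in the plane, there exists a point z outside P such that z lies in none of the edge slabs of P; equivalently, the orthogonal projection of z onto the line of each edge e lies strictly outside the closed segment e. Consequently, z has a unique farthest vertex of P and every point of the boundary of P can strictly increase its distance to z by moving along the boundary, except at that unique vertex. -/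
open scoped RealInnerProductSpace

/-- For any (strictly) convex polygon `P` with vertices
`v 0, …, v (m+2)` (at least three vertices) in counterclockwise order (each consecutive
cross product positive), there exists a point `z` outside `P` lying in none of the edge
slabs: for each edge `e_i = [v i, v (i+1)]` (indices cyclic), the orthogonal projection of
`z` onto the line through `e_i` lies strictly outside the closed segment. -/
theorem stmt18 (m : ℕ) (v : Fin (m + 3) → EuclideanSpace ℝ (Fin 2))
    (hccw : ∀ i : Fin (m + 3),
      0 < (v (i + 1) - v i) 0 * (v (i + 2) - v (i + 1)) 1
          - (v (i + 1) - v i) 1 * (v (i + 2) - v (i + 1)) 0) :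
    ∃ z : EuclideanSpace ℝ (Fin 2), z ∉ convexHull ℝ (Set.range v) ∧
      ∀ i : Fin (m + 3),
        ¬ (0 ≤ ⟪v (i + 1) - v i, z - v i⟫ ∧
            ⟪v (i + 1) - v i, z - v i⟫ ≤ ‖v (i + 1) - v i‖ ^ 2) := by
  -- edges are nonzero
  have hdne : ∀ i : Fin (m + 3), ¬ ((v (i+1) - v i) 0 = 0 ∧ (v (i+1) - v i) 1 = 0) := by
    intro i ⟨h0, h1⟩
    have := hccw i
    rw [h0, h1] at this
    linarith
  -- choose a slope avoiding all edge slopes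
  obtain ⟨s, hs⟩ := Infinite.exists_notMem_finset
    (Finset.univ.image fun i : Fin (m+3) => -((v (i+1) - v i) 0) / ((v (i+1) - v i) 1))
  set u : EuclideanSpace ℝ (Fin 2) := !₂[1, s] with hu
  have hinner : ∀ i : Fin (m+3),
      ⟪v (i+1) - v i, u⟫ = (v (i+1) - v i) 0 + (v (i+1) - v i) 1 * s := by
    intro i
    simp [hu, PiLp.inner_apply, Fin.sum_univ_two]; ring
  have hc : ∀ i : Fin (m+3), ⟪v (i+1) - v i, u⟫ ≠ 0 := by
    intro i h
    rw [hinner i] at h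
    by_cases h1 : (v (i+1) - v i) 1 = 0
    · exact hdne i ⟨by rw [h1] at h; linarith, h1⟩
    · apply hs
      rw [Finset.mem_image]
      exact ⟨i, Finset.mem_univ i, by rw [div_eq_iff h1]; linear_combination -h⟩
  -- bound on the hull
  obtain ⟨R, hR⟩ := (isBounded_iff_forall_norm_le.mp
    (((Set.finite_range v).isCompact_convexHull (𝕜 := ℝ)).isBounded))
  set T : Fin (m+3) → ℝ := fun i =>
    if 0 < ⟪v (i+1) - v i, u⟫ then
      (‖v (i+1) - v i‖^2 + ⟪v (i+1) - v i, v i⟫) / ⟪v (i+1) - v i, u⟫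
    else ⟪v (i+1) - v i, v i⟫ / ⟪v (i+1) - v i, u⟫ with hT
  set t : ℝ := max (Finset.univ.sup' ⟨0, Finset.mem_univ 0⟩ T) (max R 0) + 1 with htdef
  have htpos : 0 < t := by
    have := le_max_right (Finset.univ.sup' ⟨0, Finset.mem_univ 0⟩ T) (max R 0)
    have := le_max_right R 0
    simp only [htdef]; linarith
  have htT : ∀ i : Fin (m+3), T i < t := by
    intro i
    have h1 : T i ≤ Finset.univ.sup' ⟨0, Finset.mem_univ 0⟩ T :=
      Finset.le_sup' T (Finset.mem_univ i)
    have := le_max_left (Finset.univ.sup' ⟨0, Finset.mem_univ 0⟩ T) (max R 0)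
    simp only [htdef]; linarith
  have htR : R < t := by
    have h1 := le_max_left R 0
    have := le_max_right (Finset.univ.sup' ⟨0, Finset.mem_univ 0⟩ T) (max R 0)
    simp only [htdef]; linarith
  have hu1 : (1 : ℝ) ≤ ‖u‖ := by
    have h2 : ‖u‖^2 = 1 + s^2 := by
      rw [← real_inner_self_eq_norm_sq]
      rw [hu, PiLp.inner_apply, Fin.sum_univ_two]
      simp
    nlinarith [norm_nonneg u]
  refine ⟨t • u, ?_, ?_⟩
  · intro hin
    have hle := hR _ hin
    have : ‖t • u‖ = t * ‖u‖ := by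
      rw [norm_smul, Real.norm_eq_abs, abs_of_pos htpos]
    nlinarith
  · intro i ⟨hge, hle⟩
    have key : ⟪v (i+1) - v i, t • u - v i⟫
        = t * ⟪v (i+1) - v i, u⟫ - ⟪v (i+1) - v i, v i⟫ := by
      rw [inner_sub_right, real_inner_smul_right]
    rcases lt_or_gt_of_ne (hc i) with hneg | hpos
    · -- c < 0 : first inequality fails
      have hTi : T i = ⟪v (i+1) - v i, v i⟫ / ⟪v (i+1) - v i, u⟫ := by
        simp only [hT]; rw [if_neg (not_lt.mpr hneg.le)]
      have := htT i
      rw [hTi] at this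
      have h2 : t * ⟪v (i+1) - v i, u⟫ < ⟪v (i+1) - v i, v i⟫ :=
        (div_lt_iff_of_neg hneg).mp this
      rw [key] at hge
      linarith
    · -- c > 0 : second inequality fails
      have hTi : T i = (‖v (i+1) - v i‖^2 + ⟪v (i+1) - v i, v i⟫) / ⟪v (i+1) - v i, u⟫ := by
        simp only [hT]; rw [if_pos hpos]
      have := htT i
      rw [hTi] at this
      have h2 : ‖v (i+1) - v i‖^2 + ⟪v (i+1) - v i, v i⟫ < t * ⟪v (i+1) - v i, u⟫ :=
        (div_lt_iff₀ hpos).mp this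
      rw [key] at hle
      linarith
end
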